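/- arXiv:1910.10867 — 9 statements merged into one kernel-verified Lean document; each statement's English description precedes it below -/
import Mathlib

section
/- Let h ≥ 1 and let λ_1, …, λ_h be distinct complex numbers, none of which is an uncontrollable eigenvalue of (A,B). Then dim(V(λ_1) + V(λ_2) + ⋯ + V(λ_h)) = dim(Σ_{k=0}^{h−1} A^k(range B)); that is, the dimension of the sum of the pencil subspaces equals the rank of the matrix [B, AB, …, A^{h−1}B]. -/
open Matrix Submodule Polynomial

namespace PencilProof

variable {M : Type*} [AddCommGroup M] [Module ℂ M]

/-- Krylov-type subspace for an endomorphism. -/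
noncomputable def KS (F : Module.End ℂ M) (U : Submodule ℂ M) (j : ℕ) : Submodule ℂ M :=
  ⨆ k ∈ Finset.range j, Submodule.map (F ^ k) U

lemma map_pow_le_KS {F : Module.End ℂ M} {U : Submodule ℂ M} {k j : ℕ} (hk : k < j) :
    Submodule.map (F ^ k) U ≤ KS F U j :=
  le_iSup₂ (f := fun k (_ : k ∈ Finset.range j) => Submodule.map (F ^ k) U) k
    (Finset.mem_range.mpr hk)

lemma KS_mono {F : Module.End ℂ M} {U : Submodule ℂ M} {i j : ℕ} (hij : i ≤ j) :
    KS F U i ≤ KS F U j :=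
  iSup₂_le fun _ hk => map_pow_le_KS (lt_of_lt_of_le (Finset.mem_range.mp hk) hij)

lemma U_le_KS {F : Module.End ℂ M} {U : Submodule ℂ M} {j : ℕ} (hj : 0 < j) :
    U ≤ KS F U j := by
  have h0 : Submodule.map (F ^ 0) U = U := by
    rw [pow_zero, Module.End.one_eq_id, Submodule.map_id]
  exact le_trans (le_of_eq h0.symm) (map_pow_le_KS hj)

lemma map_F_KS (F : Module.End ℂ M) (U : Submodule ℂ M) (j : ℕ) :
    Submodule.map F (KS F U j) ≤ KS F U (j + 1) := by
  rw [KS, Submodule.map_iSup]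
  refine iSup_le fun k => ?_
  rw [Submodule.map_iSup]
  refine iSup_le fun hk => ?_
  rw [← Submodule.map_comp, ← Module.End.mul_eq_comp, ← pow_succ']
  exact map_pow_le_KS (Nat.succ_lt_succ (Finset.mem_range.mp hk))

lemma map_le_KS_succ (F : Module.End ℂ M) (U : Submodule ℂ M) (a : ℂ) (j : ℕ) :
    Submodule.map (F - a • 1) (KS F U j) ≤ KS F U (j + 1) := by
  rintro _ ⟨y, hy, rfl⟩
  have hFy : F y ∈ KS F U (j + 1) := map_F_KS F U j (Submodule.mem_map_of_mem hy)
  have hay : a • y ∈ KS F U (j + 1) := Submodule.smul_mem _ a (KS_mono (Nat.le_succ j) hy)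
  have : (F - a • 1) y = F y - a • y := by
    simp [LinearMap.sub_apply, LinearMap.smul_apply]
  rw [this]
  exact sub_mem hFy hay

lemma aeval_mem_KS {F : Module.End ℂ M} {U : Submodule ℂ M} {j : ℕ} {p : ℂ[X]}
    (hp : p.natDegree < j) {u : M} (hu : u ∈ U) : (aeval F p) u ∈ KS F U j := by
  rw [aeval_eq_sum_range' hp]
  rw [LinearMap.coe_sum, Finset.sum_apply]
  refine Submodule.sum_mem _ fun k hk => ?_
  rw [LinearMap.smul_apply]
  exact Submodule.smul_mem _ _
    (map_pow_le_KS (Finset.mem_range.mp hk) (Submodule.mem_map_of_mem hu))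

lemma aeval_X_sub_C (F : Module.End ℂ M) (a : ℂ) :
    aeval F (X - C a) = F - a • 1 := by
  rw [map_sub, aeval_X, aeval_C, Algebra.algebraMap_eq_smul_one]

lemma aeval_C_mul (F : Module.End ℂ M) (a : ℂ) (p : ℂ[X]) :
    aeval F (C a * p) = a • aeval F p := by
  rw [_root_.map_mul, aeval_C, Algebra.algebraMap_eq_smul_one, smul_mul_assoc, one_mul]

lemma aeval_mul_apply (F : Module.End ℂ M) (p r : ℂ[X]) (y : M) :
    aeval F (p * r) y = aeval F p (aeval F r y) := by
  rw [_root_.map_mul]; rfl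


variable {h : ℕ}

/-- The Lagrange leading coefficients. -/
noncomputable def cc (lam : Fin h → ℂ) (i : Fin h) : ℂ :=
  ∏ j ∈ Finset.univ.erase i, (lam i - lam j)⁻¹

/-- Quotient of `X^k - lam i ^ k` by `X - lam i`. -/
noncomputable def dd (lam : Fin h → ℂ) (i : Fin h) (k : ℕ) : ℂ[X] :=
  ∑ j ∈ Finset.range k, X ^ j * C (lam i) ^ (k - 1 - j)

lemma dd_mul (lam : Fin h → ℂ) (i : Fin h) (k : ℕ) :
    dd lam i k * (X - C (lam i)) = X ^ k - C (lam i ^ k) :=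
  (geom_sum₂_mul (X : ℂ[X]) (C (lam i)) k).trans (by rw [C_pow])

lemma basis_eq (lam : Fin h → ℂ) (i : Fin h) :
    Lagrange.basis Finset.univ lam i
      = C (cc lam i) * ∏ j ∈ Finset.univ.erase i, (X - C (lam j)) := by
  rw [Lagrange.basis, cc, map_prod, ← Finset.prod_mul_distrib]
  rfl

lemma prod_erase_natDegree (lam : Fin h → ℂ) (i : Fin h) :
    (∏ j ∈ Finset.univ.erase i, (X - C (lam j))).natDegree = h - 1 := by
  rw [Polynomial.natDegree_prod _ _ fun j _ => Polynomial.X_sub_C_ne_zero (lam j)]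
  simp [Polynomial.natDegree_X_sub_C, Finset.card_erase_of_mem]

lemma coeff_prod_erase (lam : Fin h → ℂ) (i : Fin h) :
    (∏ j ∈ Finset.univ.erase i, (X - C (lam j))).coeff (h - 1) = 1 := by
  have hm : (∏ j ∈ Finset.univ.erase i, (X - C (lam j))).Monic :=
    monic_prod_of_monic _ _ fun j _ => monic_X_sub_C (lam j)
  have := hm.coeff_natDegree
  rwa [prod_erase_natDegree lam i] at this

lemma powsum (lam : Fin h → ℂ) (hdist : Function.Injective lam)
    (p : ℕ) (hp : p + 1 < h) : ∑ i, cc lam i * lam i ^ p = 0 := by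
  have hinj : Set.InjOn lam (Finset.univ : Finset (Fin h)) :=
    Function.Injective.injOn hdist
  have hdeg : ((X : ℂ[X]) ^ p).degree < (Finset.univ : Finset (Fin h)).card := by
    rw [degree_X_pow]
    simp only [Finset.card_univ, Fintype.card_fin]
    exact_mod_cast (by omega : p < h)
  have hX := Lagrange.eq_interpolate (v := lam) hinj hdeg
  have hc := congrArg (fun f : ℂ[X] => f.coeff (h - 1)) hX
  simp only [Lagrange.interpolate_apply, Polynomial.finset_sum_coeff, basis_eq lam,
    eval_pow, eval_X, ← mul_assoc, ← Polynomial.C_mul, Polynomial.coeff_C_mul,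
    coeff_prod_erase lam, Polynomial.coeff_X_pow, mul_one] at hc
  rw [if_neg (by omega)] at hc
  exact (Finset.sum_congr rfl fun i _ => mul_comm _ _).trans hc.symm

lemma sum_cd (lam : Fin h → ℂ) (hdist : Function.Injective lam)
    (k : ℕ) (hk : k < h) : ∑ i, C (cc lam i) * dd lam i k = 0 := by
  have hterm : ∀ i : Fin h, C (cc lam i) * dd lam i k
      = ∑ j ∈ Finset.range k, C (cc lam i * lam i ^ (k - 1 - j)) * X ^ j := by
    intro i
    rw [dd, Finset.mul_sum]
    refine Finset.sum_congr rfl fun j _ => ?_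
    rw [← Polynomial.C_pow, Polynomial.C_mul]
    ring
  simp_rw [hterm]
  rw [Finset.sum_comm]
  refine Finset.sum_eq_zero fun j hj => ?_
  rw [← Finset.sum_mul, ← map_sum C _ Finset.univ,
    powsum lam hdist (k - 1 - j) (by have := Finset.mem_range.mp hj; omega),
    map_zero, zero_mul]


lemma range_aeval_prod_sup (F : Module.End ℂ M) (U : Submodule ℂ M) {h : ℕ}
    (lam : Fin h → ℂ) (hctrl : ∀ i, LinearMap.range (F - lam i • 1) ⊔ U = ⊤)
    (s : Finset (Fin h)) :
    LinearMap.range (aeval F (∏ i ∈ s, (X - C (lam i))) : M →ₗ[ℂ] M) ⊔ KS F U s.card = ⊤ := by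
  classical
  induction s using Finset.induction_on with
  | empty =>
    rw [Finset.prod_empty, _root_.map_one]
    have h1 : LinearMap.range ((1 : Module.End ℂ M) : M →ₗ[ℂ] M) = ⊤ :=
      LinearMap.range_eq_top.mpr fun x => ⟨x, rfl⟩
    rw [h1, top_sup_eq]
  | @insert i s his ih =>
    rw [Finset.prod_insert his, Finset.card_insert_of_notMem his]
    apply le_antisymm le_top
    have h1 : (⊤ : Submodule ℂ M) = Submodule.map (F - lam i • 1) ⊤ ⊔ U := by
      rw [Submodule.map_top]; exact (hctrl i).symm
    rw [h1, ← ih, Submodule.map_sup]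
    refine sup_le (sup_le ?_ ?_) ?_
    · rw [← LinearMap.range_comp, ← Module.End.mul_eq_comp, ← aeval_X_sub_C F (lam i),
        ← _root_.map_mul]
      exact le_sup_left
    · exact le_sup_of_le_right (map_le_KS_succ F U (lam i) s.card)
    · exact le_sup_of_le_right (U_le_KS (Nat.succ_pos _))

theorem key [FiniteDimensional ℂ M] (F : Module.End ℂ M) (U : Submodule ℂ M)
    (h : ℕ) (hh : 1 ≤ h) (lam : Fin h → ℂ) (hdist : Function.Injective lam)
    (hctrl : ∀ i, LinearMap.range (F - lam i • 1) ⊔ U = ⊤) :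
    Module.finrank ℂ ↥(⨆ i, Submodule.comap (F - lam i • 1) U)
      = Module.finrank ℂ ↥(KS F U h) := by
  classical
  haveI : Nonempty (Fin h) := ⟨⟨0, hh⟩⟩
  set q : ℂ[X] := ∏ i, (X - C (lam i)) with hq
  set W : Submodule ℂ M := ⨆ i, Submodule.comap (F - lam i • 1) U with hW
  -- L1
  have hL1 : W ≤ Submodule.comap (aeval F q) (KS F U h) := by
    rw [hW]
    refine iSup_le fun i x hx => ?_
    rw [Submodule.mem_comap] at hx ⊢
    have hsplit : q = (∏ j ∈ Finset.univ.erase i, (X - C (lam j))) * (X - C (lam i)) := by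
      rw [hq, ← Finset.prod_erase_mul _ _ (Finset.mem_univ i)]
    rw [hsplit, aeval_mul_apply, aeval_X_sub_C]
    exact aeval_mem_KS (by rw [prod_erase_natDegree lam i]; omega) hx
  -- L2
  have hL2 : Submodule.comap (aeval F q) (KS F U h) ≤ W := by
    intro x hx
    rw [Submodule.mem_comap] at hx
    have hKS : KS F U h = ⨆ i : Fin h, Submodule.map (F ^ (i : ℕ)) U := by
      apply le_antisymm
      · exact iSup₂_le fun k hk =>
          le_iSup_of_le (f := fun i : Fin h => Submodule.map (F ^ (i : ℕ)) U)
            ⟨k, Finset.mem_range.mp hk⟩ le_rfl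
      · exact iSup_le fun i => map_pow_le_KS i.isLt
    rw [hKS, Submodule.mem_iSup_iff_exists_finsupp] at hx
    obtain ⟨w, hw, hsum⟩ := hx
    have hsum' : ∑ k : Fin h, w k = (aeval F q) x := by
      rw [← hsum]
      exact (Finsupp.sum_fintype w (fun _ v => v) fun i => rfl).symm
    choose u hu hFu using fun k => Submodule.mem_map.mp (hw k)
    set xi : Fin h → M := fun i =>
      aeval F (Lagrange.basis Finset.univ lam i) x
        - ∑ k : Fin h, aeval F (C (cc lam i) * dd lam i (k : ℕ)) (u k) with hxi
    -- each xi i lies in the corresponding pencil space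
    have hA : ∀ i, xi i ∈ Submodule.comap (F - lam i • 1) U := by
      intro i
      rw [Submodule.mem_comap]
      have hgen : ∀ (p : ℂ[X]) (y : M),
          (F - lam i • 1) ((aeval F p) y) = (aeval F ((X - C (lam i)) * p)) y := by
        intro p y
        rw [aeval_mul_apply, aeval_X_sub_C]
      have hb : (X - C (lam i)) * Lagrange.basis Finset.univ lam i = C (cc lam i) * q := by
        rw [basis_eq lam i, hq, ← Finset.prod_erase_mul _ _ (Finset.mem_univ i)]
        ring
      have hdk : ∀ k : ℕ, (X - C (lam i)) * (C (cc lam i) * dd lam i k)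
          = C (cc lam i) * (X ^ k - C (lam i ^ k)) := by
        intro k
        rw [← dd_mul lam i k]
        ring
      have hterm1 : (F - lam i • 1) ((aeval F (Lagrange.basis Finset.univ lam i)) x)
          = ∑ k : Fin h, cc lam i • (F ^ (k : ℕ)) (u k) := by
        rw [hgen, hb, aeval_C_mul, LinearMap.smul_apply, ← hsum', Finset.smul_sum]
        refine Finset.sum_congr rfl fun k _ => ?_
        rw [← hFu k]
      have hterm2 : ∀ k : Fin h,
          (F - lam i • 1) ((aeval F (C (cc lam i) * dd lam i (k : ℕ))) (u k))
          = cc lam i • ((F ^ (k : ℕ)) (u k) - lam i ^ (k : ℕ) • u k) := by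
        intro k
        rw [hgen, hdk, aeval_C_mul, LinearMap.smul_apply, map_sub, LinearMap.sub_apply,
          aeval_X_pow, aeval_C, Algebra.algebraMap_eq_smul_one, LinearMap.smul_apply,
          Module.End.one_apply]
      have hcompute : (F - lam i • 1) (xi i)
          = ∑ k : Fin h, (cc lam i * lam i ^ (k : ℕ)) • u k := by
        simp only [hxi, _root_.map_sub, _root_.map_sum, hterm1, hterm2]
        rw [← Finset.sum_sub_distrib]
        refine Finset.sum_congr rfl fun k _ => ?_
        rw [smul_sub, smul_smul]
        abel
      rw [hcompute]
      exact Submodule.sum_mem _ fun k _ => Submodule.smul_mem _ _ (hu k)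
    -- the xi i sum to x
    have hB : ∑ i, xi i = x := by
      rw [hxi, Finset.sum_sub_distrib]
      have hs1 : ∑ i, (aeval F (Lagrange.basis Finset.univ lam i)) x = x := by
        rw [← LinearMap.sum_apply, ← _root_.map_sum,
          Lagrange.sum_basis (Function.Injective.injOn hdist) Finset.univ_nonempty, _root_.map_one,
          Module.End.one_apply]
      have hs2 : ∑ i, ∑ k : Fin h, (aeval F (C (cc lam i) * dd lam i (k : ℕ))) (u k) = 0 := by
        rw [Finset.sum_comm]
        refine Finset.sum_eq_zero fun k _ => ?_
        rw [← LinearMap.sum_apply, ← _root_.map_sum, sum_cd lam hdist (k : ℕ) k.isLt,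
          map_zero, LinearMap.zero_apply]
      rw [hs1, hs2, sub_zero]
    rw [← hB, hW]
    exact Submodule.sum_mem _ fun i _ => Submodule.mem_iSup_of_mem i (hA i)
  -- L3
  have hL3 : LinearMap.range (aeval F q : M →ₗ[ℂ] M) ⊔ KS F U h = ⊤ := by
    have := range_aeval_prod_sup F U lam hctrl Finset.univ
    rwa [Finset.card_univ, Fintype.card_fin] at this
  -- conclude via the first isomorphism theorem
  set g : M →ₗ[ℂ] M ⧸ KS F U h := (KS F U h).mkQ ∘ₗ (aeval F q : M →ₗ[ℂ] M) with hg
  have hker : LinearMap.ker g = W := by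
    rw [hg, LinearMap.ker_comp, Submodule.ker_mkQ]
    exact le_antisymm hL2 hL1
  have hrg : LinearMap.range g = ⊤ := by
    rw [hg, LinearMap.range_comp]
    exact (Submodule.map_mkQ_eq_top _ _).mpr (by rw [sup_comm]; exact hL3)
  have e := (g.quotKerEquivRange).trans (LinearEquiv.ofTop _ hrg)
  have h3 : Module.finrank ℂ (M ⧸ W) = Module.finrank ℂ (M ⧸ KS F U h) := by
    rw [← hker]
    exact e.finrank_eq
  have h1 := Submodule.finrank_quotient_add_finrank W
  have h2 := Submodule.finrank_quotient_add_finrank (KS F U h)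
  omega

end PencilProof
/-- The pencil subspace `V(λ)`: projection onto the first `n` coordinates of the
kernel of `[A - λI, B]`, i.e. `{x | ∃ u, (A - λI) x + B u = 0}`. -/
noncomputable def pencilSub {n m : ℕ} (A : Matrix (Fin n) (Fin n) ℂ)
    (B : Matrix (Fin n) (Fin m) ℂ) (lam : ℂ) : Submodule ℂ (Fin n → ℂ) :=
  Submodule.map (LinearMap.fst ℂ (Fin n → ℂ) (Fin m → ℂ))
    (LinearMap.ker (((A - lam • 1).mulVecLin).coprod B.mulVecLin))

/-- `λ` is an uncontrollable eigenvalue of `(A, B)` if `(x, u) ↦ (A - λI) x + B u`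
is not surjective. -/
def IsUncontrollableEig {n m : ℕ} (A : Matrix (Fin n) (Fin n) ℂ)
    (B : Matrix (Fin n) (Fin m) ℂ) (lam : ℂ) : Prop :=
  ¬ Function.Surjective (((A - lam • 1).mulVecLin).coprod B.mulVecLin)

/-- The `h`-step Krylov subspace `Σ_{k=0}^{h-1} A^k (range B)`. -/
noncomputable def krylov {n m : ℕ} (A : Matrix (Fin n) (Fin n) ℂ)
    (B : Matrix (Fin n) (Fin m) ℂ) (h : ℕ) : Submodule ℂ (Fin n → ℂ) :=
  ⨆ k ∈ Finset.range h, Submodule.map (A.mulVecLin ^ k) (LinearMap.range B.mulVecLin)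

theorem dim_sum_pencil_eq_dim_krylov (n m : ℕ) (hn : 0 < n) (hm : 0 < m)
    (A : Matrix (Fin n) (Fin n) ℂ) (B : Matrix (Fin n) (Fin m) ℂ)
    (h : ℕ) (hh : 1 ≤ h) (lam : Fin h → ℂ)
    (hdist : Function.Injective lam)
    (hctrl : ∀ i, ¬ IsUncontrollableEig A B (lam i)) :
    Module.finrank ℂ ↥(⨆ i, pencilSub A B (lam i)) =
      Module.finrank ℂ ↥(krylov A B h) := by
  classical
  have hmv : ∀ l : ℂ, (A - l • 1).mulVecLin
      = A.mulVecLin - l • (1 : Module.End ℂ (Fin n → ℂ)) := by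
    intro l
    refine LinearMap.ext fun x => ?_
    simp [Matrix.mulVecLin_apply, Matrix.sub_mulVec, Matrix.smul_mulVec,
      Matrix.one_mulVec, LinearMap.sub_apply, LinearMap.smul_apply, Module.End.one_apply]
  have hpencil : ∀ l : ℂ, pencilSub A B l
      = Submodule.comap (A.mulVecLin - l • 1) (LinearMap.range B.mulVecLin) := by
    intro l
    ext x
    constructor
    · rintro ⟨⟨y, v⟩, hk, rfl⟩
      simp only [SetLike.mem_coe, LinearMap.mem_ker, LinearMap.coprod_apply] at hk
      rw [Submodule.mem_comap, ← hmv l]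
      exact ⟨-v, by rw [map_neg]; exact neg_eq_of_add_eq_zero_left hk⟩
    · intro hx
      rw [Submodule.mem_comap, ← hmv l] at hx
      obtain ⟨v, hv⟩ := hx
      refine ⟨(x, -v), ?_, rfl⟩
      simp only [SetLike.mem_coe, LinearMap.mem_ker, LinearMap.coprod_apply]
      rw [map_neg, hv, hmv l, add_neg_cancel]
  have hctrl' : ∀ i, LinearMap.range (A.mulVecLin - lam i • 1)
      ⊔ LinearMap.range B.mulVecLin = ⊤ := by
    intro i
    have h1 : Function.Surjective (((A - lam i • 1).mulVecLin).coprod B.mulVecLin) :=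
      not_not.mp (hctrl i)
    have h2 := LinearMap.range_eq_top.mpr h1
    rwa [LinearMap.range_coprod, hmv] at h2
  have hk : krylov A B h = PencilProof.KS A.mulVecLin (LinearMap.range B.mulVecLin) h := rfl
  have hmain := PencilProof.key A.mulVecLin (LinearMap.range B.mulVecLin) h hh lam hdist hctrl'
  have hsup : (⨆ i, pencilSub A B (lam i))
      = ⨆ i, Submodule.comap (A.mulVecLin - lam i • 1) (LinearMap.range B.mulVecLin) :=
    iSup_congr fun i => hpencil (lam i)
  rw [hsup, hk]
  exact hmain
end

section
/- Let h ≥ 1 and let λ_1, …, λ_h be distinct complex numbers, none of which is an uncontrollable eigenvalue of (A,B). If moreover Σ_{k=0}^{h−1} A^k(range B) = ℛ (the reachable subspace; this holds in particular whenever h ≥ n), then V(λ_1) + V(λ_2) + ⋯ + V(λ_h) = ℛ. -/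
open Matrix Submodule

lemma exists_dual_ext {K E F : Type*} [Field K] [AddCommGroup E] [Module K E]
    [AddCommGroup F] [Module K F] (f : E →ₗ[K] E) (g : F →ₗ[K] E)
    (hs : Function.Surjective (f.coprod g)) (φ : Module.Dual K E)
    (hφ : ∀ x ∈ Submodule.map (LinearMap.fst K E F) (LinearMap.ker (f.coprod g)), φ x = 0) :
    ∃ z : Module.Dual K E, (∀ x, z (f x) = φ x) ∧ (∀ u, z (g u) = 0) := by
  obtain ⟨s, hsec⟩ := (f.coprod g).exists_rightInverse_of_surjective
    (LinearMap.range_eq_top.mpr hs)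
  have hsc : ∀ y, (f.coprod g) (s y) = y := fun y => by
    have := congrArg (fun t => t y) hsec; simpa using this
  refine ⟨(φ.comp (LinearMap.fst K E F)).comp s, fun x => ?_, fun u => ?_⟩
  · have hp : (s (f x) - (x, 0)) ∈ LinearMap.ker (f.coprod g) := by
      rw [LinearMap.mem_ker, map_sub, hsc]; simp
    have h0 : φ ((s (f x)).1 - x) = 0 := hφ _ ⟨_, hp, rfl⟩
    rw [map_sub, sub_eq_zero] at h0
    simpa using h0
  · have hp : (s (g u) - (0, u)) ∈ LinearMap.ker (f.coprod g) := by
      rw [LinearMap.mem_ker, map_sub, hsc]; simp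
    have h0 : φ ((s (g u)).1 - 0) = 0 := hφ _ ⟨_, hp, rfl⟩
    rw [sub_zero] at h0
    simpa using h0


/-- The reachable subspace `ℛ`: the smallest `A`-invariant subspace containing `range B`. -/
noncomputable def reachSub {n m : ℕ} (A : Matrix (Fin n) (Fin n) ℂ)
    (B : Matrix (Fin n) (Fin m) ℂ) : Submodule ℂ (Fin n → ℂ) :=
  sInf {W : Submodule ℂ (Fin n → ℂ) |
    LinearMap.range B.mulVecLin ≤ W ∧ Submodule.map A.mulVecLin W ≤ W}

theorem sum_pencil_eq_reachable (n m : ℕ) (hn : 0 < n) (hm : 0 < m)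
    (A : Matrix (Fin n) (Fin n) ℂ) (B : Matrix (Fin n) (Fin m) ℂ)
    (h : ℕ) (hh : 1 ≤ h) (lam : Fin h → ℂ)
    (hdist : Function.Injective lam)
    (hctrl : ∀ i, ¬ IsUncontrollableEig A B (lam i))
    (hkry : krylov A B h = reachSub A B) :
    (⨆ i, pencilSub A B (lam i)) = reachSub A B := by
  set Am := A.mulVecLin with hAm
  set Bm := B.mulVecLin with hBm
  set R := reachSub A B with hR
  set W := ⨆ i, pencilSub A B (lam i) with hW
  -- basic facts about R
  have hBR : LinearMap.range Bm ≤ R := le_sInf fun S hS => hS.1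
  have hAR : Submodule.map Am R ≤ R :=
    le_sInf fun S hS => le_trans (Submodule.map_mono (sInf_le hS)) hS.2
  have hAmem : ∀ x ∈ R, Am x ∈ R := fun x hx => hAR ⟨x, hx, rfl⟩
  have hBmem : ∀ u, Bm u ∈ R := fun u => hBR ⟨u, rfl⟩
  -- pencil matrices pointwise
  have hfi : ∀ (i : Fin h) (x : Fin n → ℂ),
      (A - lam i • 1).mulVecLin x = Am x - lam i • x := by
    intro i x
    simp [Matrix.mulVecLin_apply, Matrix.sub_mulVec, Matrix.smul_mulVec,
      Matrix.one_mulVec, hAm]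
  have hsurj : ∀ i, Function.Surjective
      (((A - lam i • 1).mulVecLin).coprod Bm) := fun i => not_not.mp (hctrl i)
  -- iterated invariance
  have hAkR : ∀ (k : ℕ), ∀ x ∈ R, (Am ^ k) x ∈ R := by
    intro k
    induction k with
    | zero => intro x hx; simpa using hx
    | succ k ih =>
      intro x hx
      rw [pow_succ']
      exact hAmem _ (ih x hx)
  -- Direction 1: W ≤ R
  have hWR : W ≤ R := by
    rw [hW]
    apply iSup_le
    intro i
    set f := (A - lam i • 1).mulVecLin with hf
    have hfR : R ≤ R.comap f := by
      intro x hx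
      rw [Submodule.mem_comap, hfi i x]
      exact sub_mem (hAmem x hx) (Submodule.smul_mem R _ hx)
    set g := R.mapQ R f hfR with hg
    have hgsurj : Function.Surjective g := by
      intro yq
      obtain ⟨y, rfl⟩ := R.mkQ_surjective yq
      obtain ⟨⟨x, u⟩, hxu⟩ := hsurj i y
      refine ⟨R.mkQ x, ?_⟩
      rw [hg, Submodule.mkQ_apply, Submodule.mkQ_apply, Submodule.mapQ_apply]
      have hfx : f x = y - Bm u := by
        rw [← hxu, hf]; simp [LinearMap.coprod_apply, Matrix.mulVecLin_apply]
      rw [hfx, Submodule.Quotient.mk_sub]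
      have hBu : (Submodule.Quotient.mk (Bm u) : (Fin n → ℂ) ⧸ R) = 0 :=
        (Submodule.Quotient.mk_eq_zero R).mpr (hBmem u)
      rw [hBu, sub_zero]
    have hginj : Function.Injective g :=
      LinearMap.injective_iff_surjective.mpr hgsurj
    rintro x ⟨⟨x', u⟩, hker, rfl⟩
    have hker' : f x' + Bm u = 0 := by
      rw [hf, hfi i x']; simpa [LinearMap.coprod_apply, hAm, hBm] using hker
    have hfx' : f x' ∈ R := by
      have : f x' = -(Bm u) := by linear_combination (norm := module) hker'
      rw [this]; exact neg_mem (hBmem u)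
    have : g (R.mkQ x') = 0 := by
      rw [hg, Submodule.mkQ_apply, Submodule.mapQ_apply]
      exact (Submodule.Quotient.mk_eq_zero R).mpr hfx'
    have hx0 : R.mkQ x' = 0 := hginj (by rw [this, map_zero])
    exact (Submodule.Quotient.mk_eq_zero R).mp hx0
  -- Direction 2: R ≤ W
  have hRW : R ≤ W := by
    intro x hx
    rw [← Subspace.forall_mem_dualAnnihilator_apply_eq_zero_iff W x]
    intro φ hφ
    have hφV : ∀ (i : Fin h), ∀ y ∈ pencilSub A B (lam i), φ y = 0 := by
      intro i y hy
      exact (Submodule.mem_dualAnnihilator φ).mp hφ y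
        (le_iSup (fun i => pencilSub A B (lam i)) i hy)
    choose z hz1 hz2 using fun i =>
      exists_dual_ext ((A - lam i • 1).mulVecLin) Bm (hsurj i) φ (hφV i)
    have hzA : ∀ (i : Fin h) (y : Fin n → ℂ), z i (Am y) = φ y + lam i * z i y := by
      intro i y
      have h1 := hz1 i y
      rw [hfi i y, map_sub, _root_.map_smul, smul_eq_mul, sub_eq_iff_eq_add] at h1
      exact h1
    -- key iteration identity
    have hzk : ∀ (i : Fin h) (k : ℕ) (y : Fin n → ℂ),
        z i ((Am ^ k) y) = lam i ^ k * z i y +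
          ∑ j ∈ Finset.range k, lam i ^ j * φ ((Am ^ (k - 1 - j)) y) := by
      intro i k
      induction k with
      | zero => intro y; simp
      | succ k ih =>
        intro y
        have hstep : (Am ^ (k + 1)) y = (Am ^ k) (Am y) := by
          rw [pow_succ]; rfl
        rw [hstep, ih (Am y), hzA i y, Finset.sum_range_succ]
        have hterm : ∀ j ∈ Finset.range k,
            lam i ^ j * φ ((Am ^ (k - 1 - j)) (Am y)) =
            lam i ^ j * φ ((Am ^ (k + 1 - 1 - j)) y) := by
          intro j hj
          have hj' : j < k := Finset.mem_range.mp hj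
          have he : k + 1 - 1 - j = (k - 1 - j) + 1 := by omega
          rw [he, pow_succ]
          rfl
        rw [Finset.sum_congr rfl hterm]
        have he2 : k + 1 - 1 - k = 0 := by omega
        rw [he2, pow_zero]
        simp only [Module.End.one_apply]
        ring
    -- Vandermonde coefficients
    set M := (Matrix.vandermonde lam)ᵀ with hM
    have hdet : IsUnit M.det := by
      rw [hM, Matrix.det_transpose, Matrix.det_vandermonde]
      rw [isUnit_iff_ne_zero]
      apply Finset.prod_ne_zero_iff.mpr
      intro i _
      apply Finset.prod_ne_zero_iff.mpr
      intro j hj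
      have : i < j := Finset.mem_Ioi.mp hj
      exact sub_ne_zero.mpr (fun hc => absurd (hdist hc) (ne_of_gt this))
    have hl : h - 1 < h := by omega
    set e : Fin h → ℂ := Pi.single ⟨h - 1, hl⟩ 1 with he
    set a : Fin h → ℂ := M⁻¹ *ᵥ e with ha
    have hMa : M *ᵥ a = e := by
      rw [ha, Matrix.mulVec_mulVec, Matrix.mul_nonsing_inv M hdet, Matrix.one_mulVec]
    set c : ℕ → ℂ := fun d => ∑ i, a i * lam i ^ d with hc
    have hcd : ∀ (d : ℕ) (hd : d < h), c d = e ⟨d, hd⟩ := by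
      intro d hd
      have := congrFun hMa ⟨d, hd⟩
      rw [← this]
      simp only [Matrix.mulVec, dotProduct, hM, Matrix.transpose_apply,
        Matrix.vandermonde_apply, hc]
      exact Finset.sum_congr rfl fun i _ => mul_comm _ _
    have hc0 : ∀ d : ℕ, d < h - 1 → c d = 0 := by
      intro d hd
      have hd' : d < h := by omega
      have hne : (⟨d, hd'⟩ : Fin h) ≠ ⟨h - 1, hl⟩ := by
        simp only [ne_eq, Fin.mk.injEq]; omega
      rw [hcd d hd', he, Pi.single_apply, if_neg hne]
    have hc1 : c (h - 1) = 1 := by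
      rw [hcd (h-1) hl, he, Pi.single_apply, if_pos rfl]
    -- the combined functional
    set v : Module.Dual ℂ (Fin n → ℂ) := ∑ i, a i • z i with hv
    have hvk : ∀ (k : ℕ) (u : Fin m → ℂ),
        v ((Am ^ k) (Bm u)) = ∑ j ∈ Finset.range k, c j * φ ((Am ^ (k - 1 - j)) (Bm u)) := by
      intro k u
      rw [hv]
      rw [LinearMap.sum_apply]
      simp only [LinearMap.smul_apply, smul_eq_mul]
      have : ∀ i : Fin h, a i * z i ((Am ^ k) (Bm u)) =
          ∑ j ∈ Finset.range k, a i * lam i ^ j * φ ((Am ^ (k - 1 - j)) (Bm u)) := by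
        intro i
        rw [hzk i k (Bm u), hz2 i u]
        rw [mul_zero, zero_add, Finset.mul_sum]
        exact Finset.sum_congr rfl fun j _ => by ring
      rw [Finset.sum_congr rfl fun i _ => this i, Finset.sum_comm]
      refine Finset.sum_congr rfl fun j _ => ?_
      simp only [hc]
      rw [Finset.sum_mul]
    -- v vanishes on krylov hence on R
    have hvkry : ∀ y ∈ R, v y = 0 := by
      have hker : krylov A B h ≤ LinearMap.ker v := by
        rw [krylov]
        apply iSup_le; intro k; apply iSup_le; intro hk
        rintro y ⟨w, ⟨u, rfl⟩, rfl⟩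
        rw [LinearMap.mem_ker, hvk k u]
        apply Finset.sum_eq_zero
        intro j hj
        have hjk : j < k := Finset.mem_range.mp hj
        have hkh : k < h := Finset.mem_range.mp hk
        rw [hc0 j (by omega), zero_mul]
      intro y hy
      rw [← hkry] at hy
      exact LinearMap.mem_ker.mp (hker hy)
    have hsum0 : ∀ (k : ℕ) (u : Fin m → ℂ),
        ∑ j ∈ Finset.range k, c j * φ ((Am ^ (k - 1 - j)) (Bm u)) = 0 := by
      intro k u
      rw [← hvk k u]
      exact hvkry _ (hAkR k _ (hBmem u))
    -- σ_j = 0 by strong induction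
    have hσ : ∀ (j : ℕ) (u : Fin m → ℂ), φ ((Am ^ j) (Bm u)) = 0 := by
      intro j
      induction j using Nat.strong_induction_on with
      | _ j ih =>
        intro u
        have h0 := hsum0 (h + j) u
        rw [Finset.sum_eq_single (h - 1)] at h0
        · have he3 : h + j - 1 - (h - 1) = j := by omega
          rw [he3, hc1, one_mul] at h0
          exact h0
        · intro b hb hbne
          have hbk : b < h + j := Finset.mem_range.mp hb
          rcases lt_or_ge b (h - 1) with hlt | hge
          · rw [hc0 b hlt, zero_mul]
          · have hbgt : b ≥ h := by omega
            have : h + j - 1 - b < j := by omega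
            rw [ih _ this u, mul_zero]
        · intro hcon
          exact absurd (Finset.mem_range.mpr (by omega)) hcon
    -- φ vanishes on krylov = R
    have hφR : ∀ y ∈ R, φ y = 0 := by
      have hker : krylov A B h ≤ LinearMap.ker φ := by
        rw [krylov]
        apply iSup_le; intro k; apply iSup_le; intro _
        rintro y ⟨w, ⟨u, rfl⟩, rfl⟩
        exact LinearMap.mem_ker.mpr (hσ k u)
      intro y hy
      rw [← hkry] at hy
      exact LinearMap.mem_ker.mp (hker hy)
    exact hφR x hx
  exact le_antisymm hWR hRW
end

section
/- Assume B ≠ 0 and let ℛ be the reachable subspace of (A,B). Let h := min{ℓ ≥ 1 : Σ_{k=0}^{ℓ−1} A^k(range B) = ℛ}. Then the set 𝒯₁ := {q ∈ ℕ : ∃ F ∈ ℂ^{m×n} such that the restriction of A+BF to ℛ is diagonalizable and has exactly q distinct eigenvalues} is nonempty, and h = min 𝒯₁. -/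
open Matrix Submodule

/-- An endomorphism of a complex vector space is diagonalizable if the space
is spanned by eigenvectors, i.e. the eigenspaces span the whole space. -/
def IsDiagonalizable {M : Type*} [AddCommGroup M] [Module ℂ M]
    (f : M →ₗ[ℂ] M) : Prop :=
  (⨆ μ : ℂ, Module.End.eigenspace f μ) = ⊤

section KryBasic
variable {n m : ℕ} (A : Matrix (Fin n) (Fin n) ℂ) (B : Matrix (Fin n) (Fin m) ℂ)

lemma rangeB_le_reach : LinearMap.range B.mulVecLin ≤ reachSub A B :=
  le_sInf fun _ hW => hW.1

lemma reach_inv : ∀ x ∈ reachSub A B, A.mulVecLin x ∈ reachSub A B := by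
  intro x hx
  rw [reachSub, Submodule.mem_sInf] at hx ⊢
  intro W hW
  exact hW.2 (Submodule.mem_map_of_mem (hx W hW))

lemma map_pow_le_reach (k : ℕ) :
    Submodule.map (A.mulVecLin ^ k) (LinearMap.range B.mulVecLin) ≤ reachSub A B := by
  induction k with
  | zero => simpa [Module.End.one_eq_id, Submodule.map_id] using rangeB_le_reach A B
  | succ k ih =>
    rw [pow_succ', Module.End.mul_eq_comp, Submodule.map_comp]
    refine le_trans (Submodule.map_mono ih) ?_
    rw [Submodule.map_le_iff_le_comap]
    intro x hx
    exact reach_inv A B x hx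

lemma krylov_le_reach (ℓ : ℕ) : krylov A B ℓ ≤ reachSub A B :=
  iSup₂_le fun k _ => map_pow_le_reach A B k

lemma krylov_zero : krylov A B 0 = ⊥ := by
  simp [krylov]

lemma krylov_succ (ℓ : ℕ) : krylov A B (ℓ + 1) =
    LinearMap.range B.mulVecLin ⊔ Submodule.map A.mulVecLin (krylov A B ℓ) := by
  apply le_antisymm
  · refine iSup₂_le fun k hk => ?_
    match k with
    | 0 => simp [Module.End.one_eq_id, Submodule.map_id]
    | k + 1 =>
      have hk' : k ∈ Finset.range ℓ := by
        simp only [Finset.mem_range] at hk ⊢; omega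
      rw [pow_succ', Module.End.mul_eq_comp, Submodule.map_comp]
      refine le_sup_of_le_right (Submodule.map_mono ?_)
      exact le_iSup₂ (f := fun k _ =>
        Submodule.map (A.mulVecLin ^ k) (LinearMap.range B.mulVecLin)) k hk'
  · refine sup_le ?_ ?_
    · have h0 : LinearMap.range B.mulVecLin =
          Submodule.map (A.mulVecLin ^ 0) (LinearMap.range B.mulVecLin) := by simp [Module.End.one_eq_id, Submodule.map_id]
      rw [h0]
      exact le_iSup₂ (f := fun k _ =>
        Submodule.map (A.mulVecLin ^ k) (LinearMap.range B.mulVecLin)) 0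
        (Finset.mem_range.mpr (by omega))
    · rw [krylov]
      simp only [Submodule.map_iSup]
      refine iSup₂_le fun k hk => ?_
      rw [← Submodule.map_comp, ← Module.End.mul_eq_comp, ← pow_succ']
      exact le_iSup₂ (f := fun k _ =>
        Submodule.map (A.mulVecLin ^ k) (LinearMap.range B.mulVecLin)) (k + 1)
        (Finset.mem_range.mpr (by simp only [Finset.mem_range] at hk; omega))

lemma krylov_feedback (F : Matrix (Fin m) (Fin n) ℂ) (ℓ : ℕ) :
    krylov (A + B * F) B ℓ = krylov A B ℓ := by
  induction ℓ with
  | zero => rw [krylov_zero, krylov_zero]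
  | succ ℓ ih =>
    rw [krylov_succ, krylov_succ, ih]
    have hAdd : (A + B * F).mulVecLin = A.mulVecLin + B.mulVecLin ∘ₗ F.mulVecLin := by
      rw [Matrix.mulVecLin_add, Matrix.mulVecLin_mul]
    apply le_antisymm
    · refine sup_le le_sup_left ?_
      rw [Submodule.map_le_iff_le_comap]
      intro x hx
      have : (A + B * F).mulVecLin x
          = B.mulVecLin (F.mulVecLin x) + A.mulVecLin x := by
        rw [hAdd]; simp [add_comm]
      simp only [Submodule.mem_comap, this]
      exact Submodule.add_mem_sup ⟨_, rfl⟩ (Submodule.mem_map_of_mem hx)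
    · refine sup_le le_sup_left ?_
      rw [Submodule.map_le_iff_le_comap]
      intro x hx
      have : A.mulVecLin x
          = (A + B * F).mulVecLin x - B.mulVecLin (F.mulVecLin x) := by
        rw [hAdd]; simp
      simp only [Submodule.mem_comap, this]
      refine Submodule.sub_mem _ ?_ ?_
      · exact Submodule.mem_sup_right (Submodule.mem_map_of_mem hx)
      · exact Submodule.mem_sup_left ⟨_, rfl⟩
end KryBasic


section Abstract
variable {K : Type*} [Field K] {V : Type*} [AddCommGroup V] [Module K V]

/-- If a functional vanishes on `f ⁻¹ B₀`, it factors as `ψ ∘ f` with `ψ` vanishing on `B₀`. -/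
lemma factor_through (f : V →ₗ[K] V) (B₀ : Submodule K V)
    (φ : Module.Dual K V) (hφ : ∀ x, f x ∈ B₀ → φ x = 0) :
    ∃ ψ : Module.Dual K V, (∀ b ∈ B₀, ψ b = 0) ∧ ∀ x, φ x = ψ (f x) := by
  set g : V →ₗ[K] V ⧸ B₀ := B₀.mkQ.comp f with hg
  have hker : LinearMap.ker g ≤ LinearMap.ker φ := by
    intro x hx
    simp only [LinearMap.mem_ker, hg, LinearMap.comp_apply, Submodule.mkQ_apply,
      Submodule.Quotient.mk_eq_zero] at hx
    exact hφ x hx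
  set φ' : (V ⧸ LinearMap.ker g) →ₗ[K] K := (LinearMap.ker g).liftQ φ hker with hφ'
  set θ₀ : LinearMap.range g →ₗ[K] K := φ'.comp g.quotKerEquivRange.symm.toLinearMap with hθ₀
  obtain ⟨θ, hθ⟩ := LinearMap.exists_extend θ₀
  refine ⟨θ.comp B₀.mkQ, ?_, ?_⟩
  · intro b hb
    have : B₀.mkQ b = 0 := (Submodule.Quotient.mk_eq_zero B₀).mpr hb
    simp [this]
  · intro x
    have h1 : θ (g x) = θ₀ ⟨g x, LinearMap.mem_range_self g x⟩ := by
      rw [← hθ]; rfl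
    have h2 : g.quotKerEquivRange.symm ⟨g x, LinearMap.mem_range_self g x⟩
        = (LinearMap.ker g).mkQ x := g.quotKerEquivRange_symm_apply_image x (LinearMap.mem_range_self g x)
    have h3 : θ₀ ⟨g x, LinearMap.mem_range_self g x⟩ = φ x := by
      rw [hθ₀]
      simp only [LinearMap.comp_apply, LinearEquiv.coe_coe, h2]
      simp [hφ']
    calc φ x = θ (g x) := by rw [h1, h3]
    _ = (θ.comp B₀.mkQ) (f x) := rfl

lemma dual_vanish (𝒜 : V →ₗ[K] V) (B₀ : Submodule K V) (h : ℕ)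
    (htop : (⨆ k ∈ Finset.range h, Submodule.map (𝒜 ^ k) B₀) = ⊤)
    (lam : ℕ → K) (hlam : Function.Injective lam) :
    ∀ t s : ℕ, h ≤ s + t → ∀ φ : Module.Dual K V,
      (∀ k, k < s → ∀ b ∈ B₀, φ ((𝒜 ^ k) b) = 0) →
      (∀ i, i < t → ∃ ψ : Module.Dual K V, (∀ b ∈ B₀, ψ b = 0) ∧
         ∀ x, φ x = ψ (𝒜 x - lam i • x)) →
      φ = 0 := by
  intro t
  induction t with
  | zero =>
    intro s hs φ hobs _
    have hker : ⊤ ≤ LinearMap.ker φ := by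
      rw [← htop]
      refine iSup_le fun k => iSup_le fun hk => ?_
      rintro _ ⟨b, hb, rfl⟩
      exact hobs k (lt_of_lt_of_le (Finset.mem_range.mp hk) (by omega)) b hb
    ext x
    exact hker trivial
  | succ t ih =>
    intro s hs φ hobs hfac
    obtain ⟨ψt, hψt0, hψt⟩ := hfac t (Nat.lt_succ_self t)
    have obs_up : ∀ (lamv : K) (ψ : Module.Dual K V), (∀ b ∈ B₀, ψ b = 0) →
        (∀ x, φ x = ψ (𝒜 x - lamv • x)) →
        ∀ k, k < s + 1 → ∀ b ∈ B₀, ψ ((𝒜 ^ k) b) = 0 := by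
      intro lamv ψ h0 hfacψ k
      induction k with
      | zero => intro _ b hb; simpa using h0 b hb
      | succ k ihk =>
        intro hk b hb
        have hstep : ψ ((𝒜 ^ (k + 1)) b) = φ ((𝒜 ^ k) b) + lamv * ψ ((𝒜 ^ k) b) := by
          have h2 : (𝒜 ^ (k + 1)) b = 𝒜 ((𝒜 ^ k) b) := by
            rw [pow_succ']; rfl
          have h3 := hfacψ ((𝒜 ^ k) b)
          rw [map_sub, _root_.map_smul, smul_eq_mul] at h3
          rw [h2]
          linear_combination -h3
        rw [hstep, hobs k (by omega) b hb, ihk (by omega) b hb]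
        ring
    have hψt_fac : ∀ i, i < t → ∃ χ : Module.Dual K V, (∀ b ∈ B₀, χ b = 0) ∧
        ∀ x, ψt x = χ (𝒜 x - lam i • x) := by
      intro i hi
      obtain ⟨ψi, hψi0, hψi⟩ := hfac i (hi.trans (Nat.lt_succ_self t))
      have hne : lam i - lam t ≠ 0 := sub_ne_zero.mpr (hlam.ne (by omega))
      refine ⟨(lam i - lam t)⁻¹ • (ψi - ψt), fun b hb => by
        simp [hψi0 b hb, hψt0 b hb], ?_⟩
      intro x
      have e1 : ψi (𝒜 x - lam i • x) = φ x := (hψi x).symm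
      have e3 : ψt (𝒜 x - lam i • x) = φ x + (lam t - lam i) * ψt x := by
        have e2 : ψt (𝒜 x - lam t • x) = φ x := (hψt x).symm
        rw [map_sub, _root_.map_smul, smul_eq_mul] at e2 ⊢
        linear_combination e2
      simp only [LinearMap.smul_apply, LinearMap.sub_apply, smul_eq_mul]
      rw [e1, e3]
      field_simp
      ring
    have hz : ψt = 0 := ih (s + 1) (by omega) ψt
      (obs_up (lam t) ψt hψt0 hψt) hψt_fac
    ext x
    rw [hψt x, hz]
    simp

lemma sup_comap_eq_top (𝒜 : V →ₗ[K] V) (B₀ : Submodule K V) (h : ℕ)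
    (htop : (⨆ k ∈ Finset.range h, Submodule.map (𝒜 ^ k) B₀) = ⊤)
    (lam : ℕ → K) (hlam : Function.Injective lam) :
    (⨆ i ∈ Finset.range h, Submodule.comap (𝒜 - lam i • LinearMap.id) B₀) = ⊤ := by
  by_contra hne
  obtain ⟨φ, hφ0, hφ⟩ := Submodule.exists_dual_map_eq_bot_of_lt_top
    (lt_top_iff_ne_top.mpr hne) inferInstance
  have hvan : ∀ i, i < h → ∀ x, 𝒜 x - lam i • x ∈ B₀ → φ x = 0 := by
    intro i hi x hx
    have hmem : x ∈ (⨆ i ∈ Finset.range h, Submodule.comap (𝒜 - lam i • LinearMap.id) B₀) := by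
      refine le_iSup₂ (f := fun i _ => Submodule.comap (𝒜 - lam i • LinearMap.id) B₀)
        i (Finset.mem_range.mpr hi) ?_
      simpa using hx
    have : φ x ∈ Submodule.map φ (⨆ i ∈ Finset.range h,
        Submodule.comap (𝒜 - lam i • LinearMap.id) B₀) := Submodule.mem_map_of_mem hmem
    rw [hφ] at this
    simpa using this
  have hfac : ∀ i, i < h → ∃ ψ : Module.Dual K V, (∀ b ∈ B₀, ψ b = 0) ∧
      ∀ x, φ x = ψ (𝒜 x - lam i • x) := by
    intro i hi
    obtain ⟨ψ, h1, h2⟩ := factor_through (𝒜 - lam i • LinearMap.id) B₀ φ (by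
      intro x hx
      exact hvan i hi x (by simpa using hx))
    exact ⟨ψ, h1, fun x => by simpa using h2 x⟩
  exact hφ0 (dual_vanish 𝒜 B₀ h htop lam hlam h 0 (by omega) φ (fun k hk => absurd hk (by omega)) hfac)
end Abstract



section Lower
variable {n m : ℕ} (A : Matrix (Fin n) (Fin n) ℂ) (B : Matrix (Fin n) (Fin m) ℂ)

lemma lower_aux (hB : B ≠ 0) {h : ℕ} (hkry : krylov A B h = reachSub A B)
    (F : Matrix (Fin m) (Fin n) ℂ)
    (hinv : ∀ x ∈ reachSub A B, (A + B * F).mulVecLin x ∈ reachSub A B)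
    (hdiag : IsDiagonalizable ((A + B * F).mulVecLin.restrict hinv)) :
    1 ≤ {μ : ℂ | Module.End.HasEigenvalue ((A + B * F).mulVecLin.restrict hinv) μ}.ncard ∧
    krylov A B
      ({μ : ℂ | Module.End.HasEigenvalue ((A + B * F).mulVecLin.restrict hinv) μ}.ncard)
      = reachSub A B := by
  classical
  set ℛ := reachSub A B with hℛ
  set M := (A + B * F).mulVecLin.restrict hinv with hM
  set S := {μ : ℂ | Module.End.HasEigenvalue M μ} with hS
  have hRB : LinearMap.range B.mulVecLin ≤ ℛ := rangeB_le_reach A B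
  -- ℛ is nontrivial
  have hRne : ℛ ≠ ⊥ := by
    intro h0
    apply hB
    have hr : LinearMap.range B.mulVecLin = ⊥ := le_bot_iff.mp (h0 ▸ hRB)
    have hv : B.mulVecLin = 0 := LinearMap.range_eq_bot.mp hr
    have : B = LinearMap.toMatrix' (Matrix.toLin' B) := (LinearMap.toMatrix'_toLin' B).symm
    rw [this, Matrix.toLin'_apply', hv]
    simp
  have : Nontrivial ↥ℛ := Submodule.nontrivial_iff_ne_bot.mpr hRne
  -- S is finite and nonempty
  have hfin : S.Finite := Module.End.finite_hasEigenvalue M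
  have hSne : S.Nonempty := by
    by_contra hc
    rw [Set.not_nonempty_iff_eq_empty] at hc
    have hall : ∀ μ : ℂ, Module.End.eigenspace M μ = ⊥ := by
      intro μ
      by_contra hμ
      have : μ ∈ S := Module.End.hasEigenvalue_iff.mpr hμ
      simp [hc] at this
    have := hdiag
    rw [IsDiagonalizable] at this
    simp only [hall, iSup_bot] at this
    exact bot_ne_top this
  set q := S.ncard with hq
  have hq1 : 1 ≤ q := (Set.ncard_pos hfin).mpr hSne
  refine ⟨hq1, ?_⟩
  -- the annihilating polynomial
  set p : Polynomial ℂ := ∏ μ ∈ hfin.toFinset, (Polynomial.X - Polynomial.C μ) with hp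
  have hmono : p.Monic :=
    Polynomial.monic_prod_of_monic _ _ fun μ _ => Polynomial.monic_X_sub_C μ
  have hdeg : p.natDegree = q := by
    rw [hp, Polynomial.natDegree_prod _ _ (fun μ _ => Polynomial.X_sub_C_ne_zero μ)]
    simp only [Polynomial.natDegree_X_sub_C, Finset.sum_const, smul_eq_mul, mul_one]
    rw [hq, Set.ncard_eq_toFinset_card S hfin]
  have hp0 : Polynomial.aeval M p = 0 := by
    apply LinearMap.ext
    intro x
    have hxtop : x ∈ (⨆ μ : ℂ, Module.End.eigenspace M μ) := by
      rw [hdiag]; trivial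
    simp only [LinearMap.zero_apply]
    refine Submodule.iSup_induction _ (motive := fun x => (Polynomial.aeval M p) x = 0) hxtop
      ?_ (by simp) ?_
    · intro μ x hx
      by_cases hμ : μ ∈ hfin.toFinset
      · have hsplit : p = (∏ ν ∈ hfin.toFinset.erase μ, (Polynomial.X - Polynomial.C ν)) *
            (Polynomial.X - Polynomial.C μ) := by
          rw [hp, ← Finset.mul_prod_erase _ _ hμ, mul_comm]
        rw [hsplit, _root_.map_mul]
        have hxeig : M x = μ • x := Module.End.mem_eigenspace_iff.mp hx
        have : (Polynomial.aeval M (Polynomial.X - Polynomial.C μ)) x = 0 := by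
          simp [map_sub, Module.algebraMap_end_apply, hxeig,
            LinearMap.sub_apply]
        rw [Module.End.mul_apply, this, map_zero]
      · have : Module.End.eigenspace M μ = ⊥ := by
          by_contra hne
          exact hμ (hfin.mem_toFinset.mpr (Module.End.hasEigenvalue_iff.mpr hne))
        rw [this] at hx
        simp only [Submodule.mem_bot] at hx
        simp [hx]
    · intro x y hx hy
      simp [map_add, hx, hy]
  -- M ^ q as a combination of smaller powers
  have hMq : M ^ q = ∑ k ∈ Finset.range q, (-(p.coeff k)) • M ^ k := by
    have e := Polynomial.aeval_eq_sum_range (R := ℂ) (p := p) M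
    rw [hp0, hdeg, Finset.sum_range_succ] at e
    have hc : p.coeff q = 1 := by
      have := hmono.coeff_natDegree
      rwa [hdeg] at this
    rw [hc, one_smul] at e
    have h4 : M ^ q + ∑ k ∈ Finset.range q, p.coeff k • M ^ k = 0 := by
      rw [add_comm]; exact e.symm
    have h5 : (∑ k ∈ Finset.range q, (-(p.coeff k)) • M ^ k)
        + ∑ k ∈ Finset.range q, p.coeff k • M ^ k = 0 := by
      rw [← Finset.sum_add_distrib]
      exact Finset.sum_eq_zero fun k _ => by module
    exact (eq_neg_of_add_eq_zero_left h4).trans (eq_neg_of_add_eq_zero_left h5).symm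
  set A' := (A + B * F).mulVecLin with hA'
  have hpow : ∀ (k : ℕ) (x : Fin n → ℂ) (hx : x ∈ ℛ),
      (((M ^ k) ⟨x, hx⟩ : ↥ℛ) : Fin n → ℂ) = (A' ^ k) x := by
    intro k x hx
    rw [hM, Module.End.pow_restrict]
    exact LinearMap.restrict_coe_apply _ _ _
  have hkey : ∀ x, ∀ hx : x ∈ ℛ, (A' ^ q) x
      = ∑ k ∈ Finset.range q, (-(p.coeff k)) • (A' ^ k) x := by
    intro x hx
    have e := congrArg (fun g : Module.End ℂ ↥ℛ => ((g ⟨x, hx⟩ : ↥ℛ) : Fin n → ℂ)) hMq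
    simp only [LinearMap.sum_apply, LinearMap.smul_apply] at e
    rw [hpow q x hx] at e
    rw [e]
    rw [AddSubmonoidClass.coe_finset_sum]
    congr 1
    ext k
    rw [Submodule.coe_smul, hpow k x hx]
  -- stabilization of the Krylov sequence of A + B F at step q
  have hstab : ∀ ℓ : ℕ, ∀ b ∈ LinearMap.range B.mulVecLin,
      (A' ^ ℓ) b ∈ krylov (A + B * F) B q := by
    intro ℓ
    induction ℓ using Nat.strong_induction_on with
    | _ ℓ ih =>
      intro b hb
      by_cases hℓ : ℓ < q
      · have : (A' ^ ℓ) b ∈ Submodule.map (A' ^ ℓ) (LinearMap.range B.mulVecLin) :=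
          Submodule.mem_map_of_mem hb
        exact le_iSup₂ (f := fun k _ =>
          Submodule.map ((A + B * F).mulVecLin ^ k) (LinearMap.range B.mulVecLin)) ℓ
          (Finset.mem_range.mpr hℓ) this
      · obtain ⟨j, rfl⟩ : ∃ j, ℓ = q + j := ⟨ℓ - q, by omega⟩
        have hbR : b ∈ ℛ := hRB hb
        have e1 : (A' ^ (q + j)) b = (A' ^ j) ((A' ^ q) b) := by
          rw [add_comm, pow_add, Module.End.mul_apply]
        rw [e1, hkey b hbR, map_sum]
        refine Submodule.sum_mem _ fun k hk => ?_
        rw [LinearMap.map_smul]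
        refine Submodule.smul_mem _ _ ?_
        have e2 : (A' ^ j) ((A' ^ k) b) = (A' ^ (j + k)) b := by
          rw [pow_add, Module.End.mul_apply]
        rw [e2]
        refine ih (j + k) ?_ b hb
        simp only [Finset.mem_range] at hk
        omega
  have hklq : krylov (A + B * F) B h ≤ krylov (A + B * F) B q := by
    refine iSup₂_le fun k _ => ?_
    rintro _ ⟨b, hb, rfl⟩
    exact hstab k b hb
  have : ℛ = krylov A B q := by
    apply le_antisymm
    · calc ℛ = krylov A B h := hkry.symm
      _ = krylov (A + B * F) B h := (krylov_feedback A B F h).symm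
      _ ≤ krylov (A + B * F) B q := hklq
      _ = krylov A B q := krylov_feedback A B F q
    · exact krylov_le_reach A B q
  exact this.symm
end Lower

section Upper
variable {n m : ℕ} (A : Matrix (Fin n) (Fin n) ℂ) (B : Matrix (Fin n) (Fin m) ℂ)

lemma upper_aux {h : ℕ} (hkry : krylov A B h = reachSub A B) :
    ∃ (F : Matrix (Fin m) (Fin n) ℂ)
      (hinv : ∀ x ∈ reachSub A B, (A + B * F).mulVecLin x ∈ reachSub A B),
      IsDiagonalizable ((A + B * F).mulVecLin.restrict hinv) ∧
      {μ : ℂ | Module.End.HasEigenvalue ((A + B * F).mulVecLin.restrict hinv) μ}.ncard ≤ h := by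
  classical
  set ℛ := reachSub A B with hℛ
  have hRB : LinearMap.range B.mulVecLin ≤ ℛ := rangeB_le_reach A B
  set 𝒜 : ↥ℛ →ₗ[ℂ] ↥ℛ := A.mulVecLin.restrict (reach_inv A B) with h𝒜
  set B₀ : Submodule ℂ ↥ℛ := Submodule.comap ℛ.subtype (LinearMap.range B.mulVecLin) with hB₀
  have hcomm : ∀ k : ℕ, ℛ.subtype ∘ₗ (𝒜 ^ k)
      = (A.mulVecLin ^ k) ∘ₗ ℛ.subtype := by
    intro k
    rw [h𝒜, Module.End.pow_restrict k]
    ext x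
    simp [LinearMap.restrict_coe_apply]
  have hmapB₀ : Submodule.map ℛ.subtype B₀ = LinearMap.range B.mulVecLin := by
    rw [hB₀, Submodule.map_comap_subtype]
    exact inf_eq_right.mpr hRB
  have htop : (⨆ k ∈ Finset.range h, Submodule.map (𝒜 ^ k) B₀) = ⊤ := by
    apply Submodule.map_injective_of_injective (show Function.Injective ℛ.subtype from
      Subtype.coe_injective)
    rw [Submodule.map_subtype_top]
    simp only [Submodule.map_iSup]
    have hx : ∀ k : ℕ, Submodule.map ℛ.subtype (Submodule.map (𝒜 ^ k) B₀)
        = Submodule.map (A.mulVecLin ^ k) (LinearMap.range B.mulVecLin) := by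
      intro k
      rw [← Submodule.map_comp, hcomm k, Submodule.map_comp, hmapB₀]
    simp only [hx]
    exact hkry
  have hsum := sup_comap_eq_top 𝒜 B₀ h htop (fun i : ℕ => (i : ℂ))
    Nat.cast_injective
  set E : ℕ → Submodule ℂ ↥ℛ :=
    fun i => Submodule.comap (𝒜 - (i : ℂ) • LinearMap.id) B₀ with hE
  set T : Set ↥ℛ := ⋃ i ∈ Finset.range h, ((E i : Submodule ℂ ↥ℛ) : Set ↥ℛ) with hT
  have hTspan : Submodule.span ℂ T = ⊤ := by
    rw [hT, Submodule.span_iUnion₂]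
    simp only [Submodule.span_eq]
    exact hsum
  obtain ⟨bs, hbsT, hbspan, hbind⟩ := exists_linearIndependent ℂ T
  have hbtop : ⊤ ≤ Submodule.span ℂ (Set.range ((↑) : bs → ↥ℛ)) := by
    rw [Subtype.range_coe, hbspan, hTspan]
  let bas : Module.Basis bs ℂ ↥ℛ := Module.Basis.mk hbind hbtop
  have hsp : Submodule.span ℂ (bs : Set ↥ℛ) = ⊤ := by rw [hbspan, hTspan]
  have hxE : ∀ x : bs, ∃ i : ℕ, i < h ∧ (x : ↥ℛ) ∈ E i := by
    intro x
    have hx := hbsT x.2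
    rw [hT] at hx
    simp only [Set.mem_iUnion, Finset.mem_range, SetLike.mem_coe] at hx
    obtain ⟨i, hi, hxa⟩ := hx
    exact ⟨i, hi, hxa⟩
  choose idx hidxlt hidxE using hxE
  have hxu : ∀ x : bs, ∃ uv : Fin m → ℂ,
      B.mulVecLin uv = (idx x : ℂ) • ((x : ↥ℛ) : Fin n → ℂ)
        - A.mulVecLin ((x : ↥ℛ) : Fin n → ℂ) := by
    intro x
    have hmem := hidxE x
    rw [hE] at hmem
    simp only [Submodule.mem_comap, LinearMap.sub_apply, LinearMap.smul_apply,
      LinearMap.id_apply, hB₀] at hmem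
    have hco : (((𝒜 (x : ↥ℛ) - (idx x : ℂ) • (x : ↥ℛ)) : ↥ℛ) : Fin n → ℂ)
        = A.mulVecLin ((x : ↥ℛ) : Fin n → ℂ)
          - (idx x : ℂ) • ((x : ↥ℛ) : Fin n → ℂ) := by
      rw [Submodule.coe_sub, Submodule.coe_smul, h𝒜, LinearMap.restrict_coe_apply]
    have hmem' : (A.mulVecLin ((x : ↥ℛ) : Fin n → ℂ)
        - (idx x : ℂ) • ((x : ↥ℛ) : Fin n → ℂ)) ∈ LinearMap.range B.mulVecLin := by
      rw [← hco]; exact hmem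
    obtain ⟨uv, huv⟩ := (LinearMap.range B.mulVecLin).neg_mem hmem'
    refine ⟨uv, ?_⟩
    rw [huv, neg_sub]
  choose u hu using hxu
  set G : ↥ℛ →ₗ[ℂ] (Fin m → ℂ) := bas.constr ℂ u with hG
  obtain ⟨W, hW⟩ := Submodule.exists_isCompl ℛ
  set proj : (Fin n → ℂ) →ₗ[ℂ] ↥ℛ := ℛ.linearProjOfIsCompl W hW with hproj
  set F : Matrix (Fin m) (Fin n) ℂ := LinearMap.toMatrix' (G ∘ₗ proj) with hF
  have hFmul : F.mulVecLin = G ∘ₗ proj := by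
    rw [hF, show (LinearMap.toMatrix' (G ∘ₗ proj)).mulVecLin
      = Matrix.toLin' (LinearMap.toMatrix' (G ∘ₗ proj)) from
        (Matrix.toLin'_apply' _).symm]
    exact Matrix.toLin'_toMatrix' _
  have hAdd : (A + B * F).mulVecLin = A.mulVecLin + B.mulVecLin ∘ₗ F.mulVecLin := by
    rw [Matrix.mulVecLin_add, Matrix.mulVecLin_mul]
  have hinv : ∀ x ∈ ℛ, (A + B * F).mulVecLin x ∈ ℛ := by
    intro x hx
    rw [hAdd]
    simp only [LinearMap.add_apply, LinearMap.comp_apply]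
    exact ℛ.add_mem (reach_inv A B x hx) (hRB ⟨_, rfl⟩)
  have heig : ∀ x : bs, ((A + B * F).mulVecLin.restrict hinv) (x : ↥ℛ)
      = (idx x : ℂ) • (x : ↥ℛ) := by
    intro x
    apply Subtype.ext
    rw [Submodule.coe_smul]
    have h1 : ((((A + B * F).mulVecLin.restrict hinv) (x : ↥ℛ)) : Fin n → ℂ)
        = (A + B * F).mulVecLin ((x : ↥ℛ) : Fin n → ℂ) :=
      LinearMap.restrict_coe_apply _ _ _
    rw [h1, hAdd]
    simp only [LinearMap.add_apply, LinearMap.comp_apply]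
    rw [hFmul]
    simp only [LinearMap.comp_apply]
    have h2 : proj ((x : ↥ℛ) : Fin n → ℂ) = (x : ↥ℛ) :=
      Submodule.linearProjOfIsCompl_apply_left hW (x : ↥ℛ)
    rw [h2]
    have h3 : G (x : ↥ℛ) = u x := by
      have hbx : (x : ↥ℛ) = bas x := (Module.Basis.mk_apply hbind hbtop x).symm
      rw [hbx, hG, Module.Basis.constr_basis]
    rw [h3, hu x]
    abel
  have hdiag : IsDiagonalizable ((A + B * F).mulVecLin.restrict hinv) := by
    rw [IsDiagonalizable, eq_top_iff, ← hsp, Submodule.span_le]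
    intro x hx
    have hm : x ∈ Module.End.eigenspace ((A + B * F).mulVecLin.restrict hinv)
        ((idx ⟨x, hx⟩ : ℂ)) :=
      Module.End.mem_eigenspace_iff.mpr (heig ⟨x, hx⟩)
    exact le_iSup (fun μ : ℂ =>
      Module.End.eigenspace ((A + B * F).mulVecLin.restrict hinv) μ) _ hm
  have hcard : {μ : ℂ | Module.End.HasEigenvalue
      ((A + B * F).mulVecLin.restrict hinv) μ}.ncard ≤ h := by
    have hsub : {μ : ℂ | Module.End.HasEigenvalue ((A + B * F).mulVecLin.restrict hinv) μ}
        ⊆ ↑((Finset.range h).image (fun i : ℕ => (i : ℂ))) := by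
      intro μ hμ
      by_contra hnot
      have hall : ∀ i, i < h → (i : ℂ) ≠ μ := by
        intro i hi hiμ
        apply hnot
        simp only [Finset.coe_image, Set.mem_image, Finset.mem_coe, Finset.mem_range]
        exact ⟨i, hi, hiμ⟩
      have hdisj := Module.End.eigenspaces_iSupIndep
        ((A + B * F).mulVecLin.restrict hinv) μ
      have htople : (⊤ : Submodule ℂ ↥ℛ) ≤ ⨆ ν, ⨆ (_ : ν ≠ μ),
          Module.End.eigenspace ((A + B * F).mulVecLin.restrict hinv) ν := by
        rw [← hsp, Submodule.span_le]
        intro x hx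
        have hm : x ∈ Module.End.eigenspace ((A + B * F).mulVecLin.restrict hinv)
            ((idx ⟨x, hx⟩ : ℂ)) :=
          Module.End.mem_eigenspace_iff.mpr (heig ⟨x, hx⟩)
        exact le_iSup₂ (f := fun ν _ =>
          Module.End.eigenspace ((A + B * F).mulVecLin.restrict hinv) ν)
          ((idx ⟨x, hx⟩ : ℂ)) (hall (idx ⟨x, hx⟩) (hidxlt ⟨x, hx⟩)) hm
      have hbot : Module.End.eigenspace ((A + B * F).mulVecLin.restrict hinv) μ = ⊥ :=
        hdisj.eq_bot_of_le (le_trans le_top htople)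
      exact (Module.End.hasEigenvalue_iff.mp hμ) hbot
    calc {μ : ℂ | Module.End.HasEigenvalue ((A + B * F).mulVecLin.restrict hinv) μ}.ncard
        ≤ (((Finset.range h).image (fun i : ℕ => (i : ℂ))) : Finset ℂ).card := by
          rw [← Set.ncard_coe_finset]
          exact Set.ncard_le_ncard hsub (Finset.finite_toSet _)
      _ ≤ (Finset.range h).card := Finset.card_image_le
      _ = h := Finset.card_range h
  exact ⟨F, hinv, hdiag, hcard⟩
end Upper

theorem min_krylov_steps_eq_min_distinct_eigs (n m : ℕ) (hn : 0 < n) (hm : 0 < m)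
    (A : Matrix (Fin n) (Fin n) ℂ) (B : Matrix (Fin n) (Fin m) ℂ)
    (hB : B ≠ 0)
    (h : ℕ)
    (hmin : IsLeast {ℓ : ℕ | 1 ≤ ℓ ∧ krylov A B ℓ = reachSub A B} h) :
    IsLeast {q : ℕ | ∃ (F : Matrix (Fin m) (Fin n) ℂ)
        (hinv : ∀ x ∈ reachSub A B, (A + B * F).mulVecLin x ∈ reachSub A B),
        IsDiagonalizable ((A + B * F).mulVecLin.restrict hinv) ∧
        {μ : ℂ | Module.End.HasEigenvalue ((A + B * F).mulVecLin.restrict hinv) μ}.ncard = q}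
      h := by
  have hkry : krylov A B h = reachSub A B := hmin.1.2
  have hlb : ∀ q ∈ {q : ℕ | ∃ (F : Matrix (Fin m) (Fin n) ℂ)
      (hinv : ∀ x ∈ reachSub A B, (A + B * F).mulVecLin x ∈ reachSub A B),
      IsDiagonalizable ((A + B * F).mulVecLin.restrict hinv) ∧
      {μ : ℂ | Module.End.HasEigenvalue ((A + B * F).mulVecLin.restrict hinv) μ}.ncard = q},
      h ≤ q := by
    rintro q ⟨F, hinv, hdiag, hq⟩
    have hla := lower_aux A B hB hkry F hinv hdiag
    rw [hq] at hla
    exact hmin.2 ⟨hla.1, hla.2⟩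
  obtain ⟨F, hinv, hdiag, hle⟩ := upper_aux A B hkry
  have hmem : {μ : ℂ | Module.End.HasEigenvalue
      ((A + B * F).mulVecLin.restrict hinv) μ}.ncard ∈ {q : ℕ |
      ∃ (F : Matrix (Fin m) (Fin n) ℂ)
      (hinv : ∀ x ∈ reachSub A B, (A + B * F).mulVecLin x ∈ reachSub A B),
      IsDiagonalizable ((A + B * F).mulVecLin.restrict hinv) ∧
      {μ : ℂ | Module.End.HasEigenvalue ((A + B * F).mulVecLin.restrict hinv) μ}.ncard = q} :=
    ⟨F, hinv, hdiag, rfl⟩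
  have hge := hlb _ hmem
  have heq : {μ : ℂ | Module.End.HasEigenvalue
      ((A + B * F).mulVecLin.restrict hinv) μ}.ncard = h := le_antisymm hle hge
  exact ⟨heq ▸ hmem, hlb⟩
end

section
/- Let h ≥ 1 and let λ_1, …, λ_h be distinct complex numbers, none of which is an invariant zero of (A,B,C,D). Let 𝔗 be the set of output-nulling subspaces 𝒱 for which there exists a friend F of 𝒱 such that the restriction of A+BF to 𝒱 is diagonalizable and its set of eigenvalues is exactly {λ_1, …, λ_h}. If 𝒱_1 ∈ 𝔗 and 𝒱_2 ∈ 𝔗, then there exists 𝒱_3 ∈ 𝔗 with 𝒱_1 + 𝒱_2 ⊆ 𝒱_3. -/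
open Matrix Submodule

/-- The Rosenbrock matrix `[[A - λI, B], [C, D]]`. -/
noncomputable def rosenbrock {n m p : ℕ} (A : Matrix (Fin n) (Fin n) ℂ)
    (B : Matrix (Fin n) (Fin m) ℂ) (C : Matrix (Fin p) (Fin n) ℂ)
    (D : Matrix (Fin p) (Fin m) ℂ) (lam : ℂ) :
    Matrix (Fin n ⊕ Fin p) (Fin n ⊕ Fin m) ℂ :=
  Matrix.fromBlocks (A - lam • 1) B C D

/-- `λ` is an invariant zero of `(A,B,C,D)` if the rank of the Rosenbrock matrix at `λ`
is strictly smaller than its normal rank (the max over `μ` of the rank at `μ`). -/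
noncomputable def IsInvariantZero {n m p : ℕ} (A : Matrix (Fin n) (Fin n) ℂ)
    (B : Matrix (Fin n) (Fin m) ℂ) (C : Matrix (Fin p) (Fin n) ℂ)
    (D : Matrix (Fin p) (Fin m) ℂ) (lam : ℂ) : Prop :=
  (rosenbrock A B C D lam).rank < ⨆ μ : ℂ, (rosenbrock A B C D μ).rank

/-- The Rosenbrock pencil subspace `W(λ) = {x | ∃ u, (A - λI)x + Bu = 0 ∧ Cx + Du = 0}`. -/
noncomputable def rosSub {n m p : ℕ} (A : Matrix (Fin n) (Fin n) ℂ)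
    (B : Matrix (Fin n) (Fin m) ℂ) (C : Matrix (Fin p) (Fin n) ℂ)
    (D : Matrix (Fin p) (Fin m) ℂ) (lam : ℂ) : Submodule ℂ (Fin n → ℂ) :=
  Submodule.map (LinearMap.fst ℂ (Fin n → ℂ) (Fin m → ℂ))
    (LinearMap.ker ((((A - lam • 1).mulVecLin).coprod B.mulVecLin).prod
      ((C.mulVecLin).coprod D.mulVecLin)))

/-- A subspace `𝒱` is output-nulling if it has a friend `F`, i.e.
`(A + BF) 𝒱 ⊆ 𝒱` and `𝒱 ⊆ ker (C + DF)`. -/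
def IsOutputNulling {n m p : ℕ} (A : Matrix (Fin n) (Fin n) ℂ)
    (B : Matrix (Fin n) (Fin m) ℂ) (C : Matrix (Fin p) (Fin n) ℂ)
    (D : Matrix (Fin p) (Fin m) ℂ) (V : Submodule ℂ (Fin n → ℂ)) : Prop :=
  ∃ F : Matrix (Fin m) (Fin n) ℂ,
    (∀ x ∈ V, (A + B * F).mulVecLin x ∈ V) ∧ V ≤ LinearMap.ker (C + D * F).mulVecLin

/-- The largest output-nulling subspace `𝒱*`. -/
noncomputable def vStar {n m p : ℕ} (A : Matrix (Fin n) (Fin n) ℂ)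
    (B : Matrix (Fin n) (Fin m) ℂ) (C : Matrix (Fin p) (Fin n) ℂ)
    (D : Matrix (Fin p) (Fin m) ℂ) : Submodule ℂ (Fin n → ℂ) :=
  sSup {V : Submodule ℂ (Fin n → ℂ) | IsOutputNulling A B C D V}

/-- The input-containing sequence: `𝒮_0 = 0`,
`𝒮_{j+1} = {Ax + Bu : x ∈ 𝒮_j, Cx + Du = 0}`. -/
noncomputable def sSeq {n m p : ℕ} (A : Matrix (Fin n) (Fin n) ℂ)
    (B : Matrix (Fin n) (Fin m) ℂ) (C : Matrix (Fin p) (Fin n) ℂ)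
    (D : Matrix (Fin p) (Fin m) ℂ) : ℕ → Submodule ℂ (Fin n → ℂ)
  | 0 => ⊥
  | (j + 1) => Submodule.map ((A.mulVecLin).coprod B.mulVecLin)
      (((sSeq A B C D j).prod ⊤) ⊓ LinearMap.ker ((C.mulVecLin).coprod D.mulVecLin))

namespace SumDiag


variable {n m p h : ℕ} (A : Matrix (Fin n) (Fin n) ℂ) (B : Matrix (Fin n) (Fin m) ℂ)
  (C : Matrix (Fin p) (Fin n) ℂ) (D : Matrix (Fin p) (Fin m) ℂ) (lam : Fin h → ℂ)

/-- The pencil eigenvector subspace for `lam i`. -/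
noncomputable def Wsub (i : Fin h) : Submodule ℂ (Fin n → ℂ) where
  carrier := {x | ∃ u, A.mulVec x + B.mulVec u = lam i • x ∧ C.mulVec x + D.mulVec u = 0}
  add_mem' := by
    rintro x y ⟨u, hu1, hu2⟩ ⟨v, hv1, hv2⟩
    refine ⟨u + v, ?_, ?_⟩
    · rw [Matrix.mulVec_add, Matrix.mulVec_add, smul_add, ← hu1, ← hv1]; abel
    · rw [Matrix.mulVec_add, Matrix.mulVec_add]
      rw [show C.mulVec x + C.mulVec y + (D.mulVec u + D.mulVec v)
        = (C.mulVec x + D.mulVec u) + (C.mulVec y + D.mulVec v) by abel, hu2, hv2, add_zero]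
  zero_mem' := ⟨0, by simp, by simp⟩
  smul_mem' := by
    rintro c x ⟨u, hu1, hu2⟩
    refine ⟨c • u, ?_, ?_⟩
    · rw [Matrix.mulVec_smul, Matrix.mulVec_smul, ← smul_add, hu1, smul_comm]
    · rw [Matrix.mulVec_smul, Matrix.mulVec_smul, ← smul_add, hu2, smul_zero]

/-- A subspace spanned by an independent family of pencil eigenvectors hitting
every `lam i`. -/
def Good (V : Submodule ℂ (Fin n → ℂ)) : Prop :=
  ∃ (N : ℕ) (x : Fin N → (Fin n → ℂ)) (u : Fin N → (Fin m → ℂ)) (μ : Fin N → Fin h),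
    LinearIndependent ℂ x ∧ Submodule.span ℂ (Set.range x) = V ∧
    Function.Surjective μ ∧
    ∀ k, A.mulVec (x k) + B.mulVec (u k) = lam (μ k) • x k ∧
         C.mulVec (x k) + D.mulVec (u k) = 0

variable {A B C D lam}

lemma good_le_iSup {V : Submodule ℂ (Fin n → ℂ)} (hV : Good A B C D lam V) :
    V ≤ ⨆ i, Wsub A B C D lam i := by
  obtain ⟨N, x, u, μ, hind, hspan, hsurj, hprop⟩ := hV
  rw [← hspan]
  refine Submodule.span_le.2 ?_
  rintro _ ⟨k, rfl⟩
  exact le_iSup (Wsub A B C D lam) (μ k) ⟨u k, (hprop k).1, (hprop k).2⟩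

lemma good_extend {V : Submodule ℂ (Fin n → ℂ)} (hV : Good A B C D lam V)
    {i : Fin h} {y : Fin n → ℂ} (hy : y ∈ Wsub A B C D lam i) (hyV : y ∉ V) :
    Good A B C D lam (V ⊔ Submodule.span ℂ {y}) := by
  obtain ⟨N, x, u, μ, hind, hspan, hsurj, hprop⟩ := hV
  obtain ⟨uy, hy1, hy2⟩ := hy
  refine ⟨N + 1, Fin.cons y x, Fin.cons uy u, Fin.cons i μ, ?_, ?_, ?_, ?_⟩
  · exact linearIndependent_fin_cons.2 ⟨hind, by rw [hspan]; exact hyV⟩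
  · rw [Fin.range_cons, Submodule.span_insert, hspan, sup_comm]
  · intro j
    obtain ⟨k, rfl⟩ := hsurj j
    exact ⟨k.succ, by simp⟩
  · intro k
    refine Fin.cases ?_ (fun k => ?_) k <;> simp [hy1, hy2, hprop]



set_option maxHeartbeats 1600000 in
lemma good_mem (hdist : Function.Injective lam) {V : Submodule ℂ (Fin n → ℂ)}
    (N : ℕ) (x : Fin N → (Fin n → ℂ)) (u : Fin N → (Fin m → ℂ)) (μ : Fin N → Fin h)
    (hind : LinearIndependent ℂ x) (hspan : Submodule.span ℂ (Set.range x) = V)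
    (hsurj : Function.Surjective μ)
    (hprop : ∀ k, A.mulVec (x k) + B.mulVec (u k) = lam (μ k) • x k ∧
         C.mulVec (x k) + D.mulVec (u k) = 0) :
    ∃ (F : Matrix (Fin m) (Fin n) ℂ)
      (hinv : ∀ z ∈ V, (A + B * F).mulVecLin z ∈ V),
      V ≤ LinearMap.ker (C + D * F).mulVecLin ∧
      (⨆ ν : ℂ, Module.End.eigenspace ((A + B * F).mulVecLin.restrict hinv) ν) = ⊤ ∧
      {ν : ℂ | Module.End.HasEigenvalue ((A + B * F).mulVecLin.restrict hinv) ν} =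
        Set.range lam := by
  -- the family inside V
  have hmemV : ∀ k, x k ∈ V := fun k => hspan ▸ Submodule.subset_span ⟨k, rfl⟩
  set x' : Fin N → V := fun k => ⟨x k, hmemV k⟩ with hx'
  have hcomp : (V.subtype : V →ₗ[ℂ] (Fin n → ℂ)) ∘ x' = x := rfl
  have hind' : LinearIndependent ℂ x' :=
    LinearIndependent.of_comp V.subtype (by rw [hcomp]; exact hind)
  have hspan' : Submodule.span ℂ (Set.range x') = ⊤ := by
    apply Submodule.map_injective_of_injective V.injective_subtype
    rw [Submodule.map_span, Submodule.map_top, Submodule.range_subtype, ← Set.range_comp,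
      hcomp, hspan]
  -- basis of V
  let b : Module.Basis (Fin N) ℂ V := Module.Basis.mk hind' (by rw [hspan'])
  have hb : ∀ k, (b k : Fin n → ℂ) = x k := fun k => by rw [Module.Basis.mk_apply]
  -- the feedback map
  obtain ⟨Q, hQ⟩ := Submodule.exists_isCompl V
  let π : (Fin n → ℂ) →ₗ[ℂ] V := V.projectionOnto Q hQ
  let G : (Fin n → ℂ) →ₗ[ℂ] (Fin m → ℂ) := (b.constr ℂ u) ∘ₗ π
  set F : Matrix (Fin m) (Fin n) ℂ := LinearMap.toMatrix' G with hF
  have hGF : F.mulVecLin = G := by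
    rw [hF, ← Matrix.toLin'_apply', Matrix.toLin'_toMatrix']
  have hFx : ∀ k, F.mulVec (x k) = u k := by
    intro k
    have h1 : π (x k) = x' k := V.projectionOnto_apply_left hQ (x' k)
    have : F.mulVecLin (x k) = (b.constr ℂ u) (π (x k)) := by rw [hGF]; rfl
    rw [Matrix.mulVecLin_apply] at this
    rw [this, h1, show x' k = b k from (Subtype.ext (hb k)).symm, Module.Basis.constr_basis]
  have e1 : ∀ k, (A + B * F).mulVecLin (x k) = lam (μ k) • x k := by
    intro k
    rw [Matrix.mulVecLin_apply, Matrix.add_mulVec, ← Matrix.mulVec_mulVec, hFx,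
      (hprop k).1]
  have e2 : ∀ k, (C + D * F).mulVecLin (x k) = 0 := by
    intro k
    rw [Matrix.mulVecLin_apply, Matrix.add_mulVec, ← Matrix.mulVec_mulVec, hFx,
      (hprop k).2]
  have hinv : ∀ z ∈ V, (A + B * F).mulVecLin z ∈ V := by
    have : Submodule.map (A + B * F).mulVecLin V ≤ V := by
      rw [← hspan, Submodule.map_span]
      refine Submodule.span_le.2 ?_
      rintro _ ⟨_, ⟨k, rfl⟩, rfl⟩
      rw [e1 k]
      exact Submodule.smul_mem _ _ (Submodule.subset_span (Set.mem_range_self k))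
    exact fun z hz => this (Submodule.mem_map_of_mem hz)
  refine ⟨F, hinv, ?_, ?_, ?_⟩
  · rw [← hspan]
    refine Submodule.span_le.2 ?_
    rintro _ ⟨k, rfl⟩
    exact LinearMap.mem_ker.2 (e2 k)
  all_goals {
    set r := (A + B * F).mulVecLin.restrict hinv with hr
    have hrx : ∀ k, r (x' k) = lam (μ k) • x' k := by
      intro k
      apply Subtype.ext
      rw [hr, LinearMap.restrict_apply]
      exact e1 k
    have heig : ∀ k, (x' k) ∈ Module.End.eigenspace r (lam (μ k)) :=
      fun k => Module.End.mem_eigenspace_iff.2 (hrx k)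
    have hxne : ∀ k, x' k ≠ 0 := fun k hk => hind'.ne_zero k hk
    have htop : ∀ (s : Set ℂ), (∀ k, lam (μ k) ∈ s) →
        (⊤ : Submodule ℂ V) ≤ ⨆ ν ∈ s, Module.End.eigenspace r ν := by
      intro s hs
      rw [← hspan']
      refine Submodule.span_le.2 ?_
      rintro _ ⟨k, rfl⟩
      exact le_iSup₂ (f := fun ν (_ : ν ∈ s) => Module.End.eigenspace r ν)
        (lam (μ k)) (hs k) (heig k)
    first
    | · -- diagonalizable
        refine eq_top_iff.2 (le_trans (htop Set.univ (fun _ => trivial)) ?_)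
        refine iSup₂_le fun ν _ => le_iSup (Module.End.eigenspace r) ν
    | · -- eigenvalue set
        apply Set.Subset.antisymm
        · intro ν hν
          by_contra hν'
          have hdisj := (Module.End.eigenspaces_iSupIndep r) ν
          have h2 : (⊤ : Submodule ℂ V) ≤ ⨆ ν' ≠ ν, Module.End.eigenspace r ν' := by
            refine le_trans (htop {ν' | ν' ≠ ν} (fun k hk => hν' ⟨μ k, hk⟩)) ?_
            exact iSup₂_le fun ν' hν'' => le_iSup₂_of_le ν' hν'' le_rfl
          rw [eq_top_iff.2 h2, disjoint_top] at hdisj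
          exact hν hdisj
        · rintro _ ⟨i, rfl⟩
          obtain ⟨k, rfl⟩ := hsurj i
          exact Module.End.hasEigenvalue_of_hasEigenvector ⟨heig k, hxne k⟩ }



set_option maxHeartbeats 1600000 in
lemma mem_good (hdist : Function.Injective lam) {V : Submodule ℂ (Fin n → ℂ)}
    (F : Matrix (Fin m) (Fin n) ℂ)
    (hinv : ∀ z ∈ V, (A + B * F).mulVecLin z ∈ V)
    (hker : V ≤ LinearMap.ker (C + D * F).mulVecLin)
    (hdiag : (⨆ ν : ℂ, Module.End.eigenspace ((A + B * F).mulVecLin.restrict hinv) ν) = ⊤)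
    (hspec : {ν : ℂ | Module.End.HasEigenvalue ((A + B * F).mulVecLin.restrict hinv) ν} =
        Set.range lam) :
    ∃ (N : ℕ) (x : Fin N → (Fin n → ℂ)) (u : Fin N → (Fin m → ℂ)) (μ : Fin N → Fin h),
      LinearIndependent ℂ x ∧ Submodule.span ℂ (Set.range x) = V ∧
      Function.Surjective μ ∧
      ∀ k, A.mulVec (x k) + B.mulVec (u k) = lam (μ k) • x k ∧
           C.mulVec (x k) + D.mulVec (u k) = 0 := by
  set r := (A + B * F).mulVecLin.restrict hinv with hr
  set S : Set V := ⋃ ν : ℂ, (Module.End.eigenspace r ν : Set V) with hS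
  have hSspan : Submodule.span ℂ S = ⊤ := by
    rw [← Submodule.iSup_eq_span]; exact hdiag
  obtain ⟨t, htS, htspan, htind⟩ := exists_linearIndependent ℂ S
  rw [hSspan] at htspan
  haveI : Finite t := Set.Finite.to_subtype (htind.setFinite)
  haveI : Fintype t := Fintype.ofFinite t
  -- eigenvalue assignment
  have hchoice : ∀ v : t, ∃ i : Fin h, (v : V) ∈ Module.End.eigenspace r (lam i) := by
    intro v
    obtain ⟨ν, hν⟩ := Set.mem_iUnion.1 (htS v.2)
    have hvne : (v : V) ≠ 0 := htind.ne_zero v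
    have : ν ∈ Set.range lam := by
      rw [← hspec]; exact Module.End.hasEigenvalue_of_hasEigenvector ⟨hν, hvne⟩
    obtain ⟨i, rfl⟩ := this
    exact ⟨i, hν⟩
  choose i hi using hchoice
  set N := Fintype.card t
  set e : Fin N ≃ t := (Fintype.equivFin t).symm
  refine ⟨N, fun k => ((e k : V) : Fin n → ℂ), fun k => F.mulVec ((e k : V) : Fin n → ℂ),
    fun k => i (e k), ?_, ?_, ?_, ?_⟩
  · -- independence
    have h1 : LinearIndependent ℂ (fun k : Fin N => ((e k : t) : V)) :=
      htind.comp e e.injective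
    exact h1.map' V.subtype V.ker_subtype
  · -- span
    have h1 : Set.range (fun k : Fin N => ((e k : t) : V)) = t := by
      rw [show (fun k : Fin N => ((e k : t) : V)) = Subtype.val ∘ e from rfl,
        Set.range_comp, e.range_eq_univ, Set.image_univ, Subtype.range_coe]
    have h2 : Set.range (fun k => ((e k : V) : Fin n → ℂ))
        = V.subtype '' (Set.range (fun k : Fin N => ((e k : t) : V))) := by
      rw [← Set.range_comp]; rfl
    rw [h2, h1, ← Submodule.map_span, htspan, Submodule.map_top, Submodule.range_subtype]
  · -- surjectivity
    intro j
    by_contra hj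
    push_neg at hj
    have hj' : ∀ v : t, i v ≠ j := by
      intro v hv
      exact hj (e.symm v) (by simpa using hv)
    have hjeig : Module.End.HasEigenvalue r (lam j) := by
      have : lam j ∈ Set.range lam := ⟨j, rfl⟩
      rw [← hspec] at this; exact this
    have hdisj := (Module.End.eigenspaces_iSupIndep r) (lam j)
    have h2 : (⊤ : Submodule ℂ V) ≤ ⨆ ν ≠ lam j, Module.End.eigenspace r ν := by
      rw [← htspan]
      refine Submodule.span_le.2 ?_
      intro v hv
      exact le_iSup₂ (f := fun ν (_ : ν ≠ lam j) => Module.End.eigenspace r ν)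
        (lam (i ⟨v, hv⟩)) (fun hvj => hj' ⟨v, hv⟩ (hdist hvj)) (hi ⟨v, hv⟩)
    rw [eq_top_iff.2 h2, disjoint_top] at hdisj
    exact hjeig hdisj
  · -- pencil equations
    intro k
    set v : V := (e k : V) with hv
    have hveig : r v = lam (i (e k)) • v := Module.End.mem_eigenspace_iff.1 (hi (e k))
    have hcoe : (A + B * F).mulVecLin (v : Fin n → ℂ) = lam (i (e k)) • (v : Fin n → ℂ) :=
      congrArg Subtype.val hveig
    constructor
    · rw [Matrix.mulVecLin_apply, Matrix.add_mulVec, ← Matrix.mulVec_mulVec] at hcoe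
      exact hcoe
    · have := hker v.2
      rw [LinearMap.mem_ker, Matrix.mulVecLin_apply, Matrix.add_mulVec,
        ← Matrix.mulVec_mulVec] at this
      exact this

lemma absorb {V₂ : Submodule ℂ (Fin n → ℂ)} (hV₂ : V₂ ≤ ⨆ i, Wsub A B C D lam i) :
    ∀ (d : ℕ) (V : Submodule ℂ (Fin n → ℂ)), Good A B C D lam V →
      n - Module.finrank ℂ V ≤ d → ∃ V', Good A B C D lam V' ∧ V ≤ V' ∧ V₂ ≤ V' := by
  intro d
  induction d with
  | zero =>
    intro V hV hd
    refine ⟨V, hV, le_rfl, ?_⟩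
    have : Module.finrank ℂ V = n := by
      have h1 : Module.finrank ℂ V ≤ n := by
        simpa [Module.finrank_fin_fun] using V.finrank_le
      omega
    have : V = ⊤ := Submodule.eq_top_of_finrank_eq (by simpa [Module.finrank_fin_fun])
    rw [this]; exact le_top
  | succ d ih =>
    intro V hV hd
    by_cases hVV : V₂ ≤ V
    · exact ⟨V, hV, le_rfl, hVV⟩
    · have hex : ∃ i, ¬ Wsub A B C D lam i ≤ V := by
        by_contra hc
        push_neg at hc
        exact hVV (le_trans hV₂ (iSup_le hc))
      obtain ⟨i, hi⟩ := hex
      rw [SetLike.not_le_iff_exists] at hi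
      obtain ⟨y, hyW, hyV⟩ := hi
      have hgood' := good_extend hV hyW hyV
      have hlt : V < V ⊔ Submodule.span ℂ {y} :=
        lt_of_le_of_ne le_sup_left
          (fun he => hyV (he ▸ (le_sup_right : _ ≤ V ⊔ Submodule.span ℂ {y}) (Submodule.mem_span_singleton_self y)))
      have hrk : Module.finrank ℂ V < Module.finrank ℂ (V ⊔ Submodule.span ℂ {y} : _) :=
        Submodule.finrank_lt_finrank_of_lt hlt
      obtain ⟨V', hV', hle, hle₂⟩ := ih (V ⊔ Submodule.span ℂ {y}) hgood' (by omega)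
      exact ⟨V', hV', le_trans le_sup_left hle, hle₂⟩


end SumDiag

theorem sum_of_diagonalizable_output_nulling (n m p : ℕ)
    (hn : 0 < n) (hm : 0 < m) (hp : 0 < p)
    (A : Matrix (Fin n) (Fin n) ℂ) (B : Matrix (Fin n) (Fin m) ℂ)
    (C : Matrix (Fin p) (Fin n) ℂ) (D : Matrix (Fin p) (Fin m) ℂ)
    (h : ℕ) (hh : 1 ≤ h) (lam : Fin h → ℂ)
    (hdist : Function.Injective lam)
    (hz : ∀ i, ¬ IsInvariantZero A B C D (lam i))
    (T : Set (Submodule ℂ (Fin n → ℂ)))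
    (hT : T = {V : Submodule ℂ (Fin n → ℂ) |
      ∃ (F : Matrix (Fin m) (Fin n) ℂ)
        (hinv : ∀ x ∈ V, (A + B * F).mulVecLin x ∈ V),
        V ≤ LinearMap.ker (C + D * F).mulVecLin ∧
        IsDiagonalizable ((A + B * F).mulVecLin.restrict hinv) ∧
        {μ : ℂ | Module.End.HasEigenvalue ((A + B * F).mulVecLin.restrict hinv) μ} =
          Set.range lam})
    (V₁ V₂ : Submodule ℂ (Fin n → ℂ)) (hV₁ : V₁ ∈ T) (hV₂ : V₂ ∈ T) :
    ∃ V₃ ∈ T, V₁ ⊔ V₂ ≤ V₃ := by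
  classical
  open SumDiag in
  subst hT
  obtain ⟨F₁, hinv₁, hker₁, hdiag₁, hspec₁⟩ := hV₁
  obtain ⟨F₂, hinv₂, hker₂, hdiag₂, hspec₂⟩ := hV₂
  have hg₁ : Good A B C D lam V₁ := mem_good hdist F₁ hinv₁ hker₁ hdiag₁ hspec₁
  have hg₂ : Good A B C D lam V₂ := mem_good hdist F₂ hinv₂ hker₂ hdiag₂ hspec₂
  have hle₂ : V₂ ≤ ⨆ i, Wsub A B C D lam i := good_le_iSup hg₂
  obtain ⟨V₃, hg₃, h13, h23⟩ := absorb hle₂ n V₁ hg₁ (by omega)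
  refine ⟨V₃, ?_, sup_le h13 h23⟩
  obtain ⟨N, x, u, μ, hind, hspan, hsurj, hprop⟩ := hg₃
  exact good_mem hdist N x u μ hind hspan hsurj hprop
end

section
/- Let h ≥ 1 and let λ_1, …, λ_h be distinct complex numbers, none of which is an invariant zero of (A,B,C,D). Then 𝒦_h := W(λ_1) + ⋯ + W(λ_h) is an output-nulling subspace and admits a friend F such that the restriction of A+BF to 𝒦_h is diagonalizable with every eigenvalue of this restriction belonging to {λ_1, …, λ_h}. Consequently, 𝒦_h is the greatest element (with respect to inclusion) of the set of output-nulling subspaces 𝒱 admitting a friend F such that the restriction of A+BF to 𝒱 is diagonalizable with all its eigenvalues in {λ_1, …, λ_h}. -/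
open Matrix Submodule

lemma mem_rosSub_iff {n m p : ℕ} {A : Matrix (Fin n) (Fin n) ℂ}
    {B : Matrix (Fin n) (Fin m) ℂ} {C : Matrix (Fin p) (Fin n) ℂ}
    {D : Matrix (Fin p) (Fin m) ℂ} {lam : ℂ} {x : Fin n → ℂ} :
    x ∈ rosSub A B C D lam ↔
      ∃ u : Fin m → ℂ, (A - lam • 1) *ᵥ x + B *ᵥ u = 0 ∧ C *ᵥ x + D *ᵥ u = 0 := by
  simp only [rosSub, Submodule.mem_map, LinearMap.mem_ker, LinearMap.prod_apply,
    LinearMap.coprod_apply, Matrix.mulVecLin_apply, LinearMap.fst_apply, Prod.exists,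
    Function.prod, Prod.mk_eq_zero]
  constructor
  · rintro ⟨a, u, ⟨h1, h2⟩, rfl⟩; exact ⟨u, h1, h2⟩
  · rintro ⟨u, h1, h2⟩; exact ⟨x, u, ⟨h1, h2⟩, rfl⟩

lemma expandAB {n m : ℕ} (A : Matrix (Fin n) (Fin n) ℂ) (B : Matrix (Fin n) (Fin m) ℂ)
    (F : Matrix (Fin m) (Fin n) ℂ) (lam : ℂ) (x : Fin n → ℂ) (u : Fin m → ℂ)
    (hu : F *ᵥ x = u) :
    (A + B * F).mulVecLin x = ((A - lam • 1) *ᵥ x + B *ᵥ u) + lam • x := by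
  rw [Matrix.mulVecLin_apply, Matrix.add_mulVec, ← Matrix.mulVec_mulVec, hu,
    Matrix.sub_mulVec, Matrix.smul_mulVec, Matrix.one_mulVec]
  abel

lemma expandCD {n m p : ℕ} (C : Matrix (Fin p) (Fin n) ℂ) (D : Matrix (Fin p) (Fin m) ℂ)
    (F : Matrix (Fin m) (Fin n) ℂ) (x : Fin n → ℂ) (u : Fin m → ℂ)
    (hu : F *ᵥ x = u) :
    (C + D * F).mulVecLin x = C *ᵥ x + D *ᵥ u := by
  rw [Matrix.mulVecLin_apply, Matrix.add_mulVec, ← Matrix.mulVec_mulVec, hu]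

theorem sum_rosSub_isGreatest (n m p : ℕ)
    (hn : 0 < n) (hm : 0 < m) (hp : 0 < p)
    (A : Matrix (Fin n) (Fin n) ℂ) (B : Matrix (Fin n) (Fin m) ℂ)
    (C : Matrix (Fin p) (Fin n) ℂ) (D : Matrix (Fin p) (Fin m) ℂ)
    (h : ℕ) (hh : 1 ≤ h) (lam : Fin h → ℂ)
    (hdist : Function.Injective lam)
    (hz : ∀ i, ¬ IsInvariantZero A B C D (lam i)) :
    IsGreatest {V : Submodule ℂ (Fin n → ℂ) |
      ∃ (F : Matrix (Fin m) (Fin n) ℂ)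
        (hinv : ∀ x ∈ V, (A + B * F).mulVecLin x ∈ V),
        V ≤ LinearMap.ker (C + D * F).mulVecLin ∧
        IsDiagonalizable ((A + B * F).mulVecLin.restrict hinv) ∧
        (∀ μ : ℂ, Module.End.HasEigenvalue ((A + B * F).mulVecLin.restrict hinv) μ →
          μ ∈ Set.range lam)}
      (⨆ i, rosSub A B C D (lam i)) := by
  
  classical
  set K := ⨆ i, rosSub A B C D (lam i) with hKdef
  constructor
  · -- membership
    set S : Set (Fin n → ℂ) := ⋃ i, (rosSub A B C D (lam i) : Set (Fin n → ℂ)) with hS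
    have hspanS : span ℂ S = K := by
      rw [hS, span_iUnion]
      simp [Submodule.span_eq, hKdef]
    obtain ⟨t, htS, htsp, hli⟩ := exists_linearIndependent ℂ S
    have htK : span ℂ t = K := by rw [htsp, hspanS]
    have htsub : ∀ x ∈ t, x ∈ K := fun x hx => htK ▸ subset_span hx
    have hchoice : ∀ x : t, ∃ (i : Fin h) (u : Fin m → ℂ),
        (A - lam i • 1) *ᵥ (x : Fin n → ℂ) + B *ᵥ u = 0 ∧
        C *ᵥ (x : Fin n → ℂ) + D *ᵥ u = 0 := by
      intro x
      have hx := htS x.2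
      rw [Set.mem_iUnion] at hx
      obtain ⟨i, hi⟩ := hx
      obtain ⟨u, hu1, hu2⟩ := mem_rosSub_iff.mp hi
      exact ⟨i, u, hu1, hu2⟩
    choose idx uf huf1 huf2 using hchoice
    have hspr : span ℂ (Set.range ((↑) : t → (Fin n → ℂ))) = K := by
      rw [Subtype.range_coe, htK]
    let bK : Module.Basis t ℂ K := (Module.Basis.span hli).map (LinearEquiv.ofEq _ _ hspr)
    have hbK : ∀ x : t, ((bK x : K) : Fin n → ℂ) = (x : Fin n → ℂ) := by
      intro x
      simp [bK, Module.Basis.span_apply]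
    obtain ⟨K', hcompl⟩ := Submodule.exists_isCompl K
    let Fl : (Fin n → ℂ) →ₗ[ℂ] (Fin m → ℂ) :=
      (bK.constr ℂ uf) ∘ₗ (Submodule.linearProjOfIsCompl K K' hcompl)
    refine ⟨LinearMap.toMatrix' Fl, ?_⟩
    set F := LinearMap.toMatrix' Fl with hFdef
    have hFml : F.mulVecLin = Fl := by
      rw [hFdef, ← Matrix.toLin'_apply', Matrix.toLin'_toMatrix']
    have hFx : ∀ x : t, F *ᵥ (x : Fin n → ℂ) = uf x := by
      intro x
      have hxK : (x : Fin n → ℂ) ∈ K := htsub x x.2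
      have h1 : Submodule.linearProjOfIsCompl K K' hcompl (x : Fin n → ℂ)
          = (⟨(x : Fin n → ℂ), hxK⟩ : K) :=
        Submodule.linearProjOfIsCompl_apply_left hcompl ⟨(x : Fin n → ℂ), hxK⟩
      have h2 : (⟨(x : Fin n → ℂ), hxK⟩ : K) = bK x := Subtype.ext (hbK x).symm
      have : F *ᵥ (x : Fin n → ℂ) = Fl (x : Fin n → ℂ) := by
        rw [← hFml, Matrix.mulVecLin_apply]
      rw [this]
      show (bK.constr ℂ uf) (Submodule.linearProjOfIsCompl K K' hcompl (x : Fin n → ℂ)) = uf x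
      rw [h1, h2, Module.Basis.constr_basis]
    have hAB : ∀ x : t, (A + B * F).mulVecLin (x : Fin n → ℂ)
        = lam (idx x) • (x : Fin n → ℂ) := by
      intro x
      rw [expandAB A B F (lam (idx x)) _ (uf x) (hFx x), huf1 x, zero_add]
    have hCD : ∀ x : t, (C + D * F).mulVecLin (x : Fin n → ℂ) = 0 := by
      intro x
      rw [expandCD C D F _ (uf x) (hFx x), huf2 x]
    have hinv : ∀ x ∈ K, (A + B * F).mulVecLin x ∈ K := by
      intro x hx
      rw [← htK] at hx
      induction hx using Submodule.span_induction with
      | mem z hz => rw [hAB ⟨z, hz⟩]; exact K.smul_mem _ (htsub z hz)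
      | zero => rw [map_zero]; exact K.zero_mem
      | add a b _ _ ha hb => rw [map_add]; exact K.add_mem ha hb
      | smul c a _ ha => rw [_root_.map_smul]; exact K.smul_mem c ha
    refine ⟨hinv, ?_, ?_, ?_⟩
    · intro x hx
      rw [← htK] at hx
      rw [LinearMap.mem_ker]
      induction hx using Submodule.span_induction with
      | mem z hz => exact hCD ⟨z, hz⟩
      | zero => rw [map_zero]
      | add a b _ _ ha hb => rw [map_add, ha, hb, add_zero]
      | smul c a _ ha => rw [_root_.map_smul, ha, smul_zero]
    all_goals {
      set g := (A + B * F).mulVecLin.restrict hinv with hgdef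
      have heig : ∀ x : t, (⟨(x : Fin n → ℂ), htsub x x.2⟩ : K)
          ∈ Module.End.eigenspace g (lam (idx x)) := by
        intro x
        rw [Module.End.mem_eigenspace_iff]
        apply Subtype.ext
        show (A + B * F).mulVecLin (x : Fin n → ℂ) = lam (idx x) • (x : Fin n → ℂ)
        exact hAB x
      have htop : (⨆ i : Fin h, Module.End.eigenspace g (lam i)) = ⊤ := by
        rw [eq_top_iff]
        rintro ⟨x, hx⟩ -
        have hx' : x ∈ span ℂ t := htK ▸ hx
        have key : ∀ z, z ∈ span ℂ t → ∀ hz : z ∈ K,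
            (⟨z, hz⟩ : K) ∈ ⨆ i : Fin h, Module.End.eigenspace g (lam i) := by
          intro z hzs
          induction hzs using Submodule.span_induction with
          | mem z hz =>
            intro hzK
            exact le_iSup (fun i => Module.End.eigenspace g (lam i)) (idx ⟨z, hz⟩) (heig ⟨z, hz⟩)
          | zero =>
            intro hz
            exact Submodule.zero_mem _
          | add a b ha hb iha ihb =>
            intro hz
            have haK : a ∈ K := htK ▸ ha
            have hbK : b ∈ K := htK ▸ hb
            exact Submodule.add_mem _ (iha haK) (ihb hbK)
          | smul c a ha iha =>
            intro hz
            have haK : a ∈ K := htK ▸ ha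
            exact Submodule.smul_mem _ c (iha haK)
        exact key x hx' hx
      first
      | -- diagonalizable
        (show (⨆ μ : ℂ, Module.End.eigenspace g μ) = ⊤
         refine le_antisymm le_top ?_
         rw [← htop]
         exact iSup_le fun i => le_iSup (fun μ : ℂ => Module.End.eigenspace g μ) (lam i))
      | -- eigenvalues in range
        (intro μ hμ
         by_contra hμr
         have hdisj := Module.End.eigenspaces_iSupIndep g μ
         have hle : Module.End.eigenspace g μ ≤ ⨆ ν, ⨆ _ : ν ≠ μ, Module.End.eigenspace g ν := by
           refine le_trans le_top ?_
           rw [← htop]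
           refine iSup_le fun i => ?_
           have hne : lam i ≠ μ := fun he => hμr ⟨i, he⟩
           exact le_iSup_of_le (lam i) (le_iSup_of_le hne le_rfl)
         exact hμ (hdisj.eq_bot_of_le hle))
    }
  · -- upper bound
    rintro V ⟨F, hinv, hker, hdiag, heigs⟩
    intro x hxV
    set g := (A + B * F).mulVecLin.restrict hinv with hgdef
    have hes : ∀ μ : ℂ, Module.End.eigenspace g μ ≤ Submodule.comap V.subtype K := by
      intro μ v hv
      rcases eq_or_ne v 0 with rfl | hv0
      · exact Submodule.zero_mem _
      · have hev : Module.End.HasEigenvalue g μ :=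
          Module.End.hasEigenvalue_of_hasEigenvector ⟨hv, hv0⟩
        obtain ⟨i, rfl⟩ := heigs μ hev
        have hgv : (A + B * F).mulVecLin (v : Fin n → ℂ) = lam i • (v : Fin n → ℂ) :=
          congrArg Subtype.val (Module.End.mem_eigenspace_iff.mp hv)
        have hCv : (C + D * F).mulVecLin (v : Fin n → ℂ) = 0 := hker v.2
        show (v : Fin n → ℂ) ∈ K
        refine le_iSup (fun i => rosSub A B C D (lam i)) i
          (mem_rosSub_iff.mpr ⟨F *ᵥ (v : Fin n → ℂ), ?_, ?_⟩)
        · have := (expandAB A B F (lam i) (v : Fin n → ℂ) (F *ᵥ (v : Fin n → ℂ)) rfl).symm.trans hgv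
          exact add_eq_right.mp this
        · have := (expandCD C D F (v : Fin n → ℂ) (F *ᵥ (v : Fin n → ℂ)) rfl).symm.trans hCv
          exact this
    have hmem : (⟨x, hxV⟩ : V) ∈ ⨆ μ : ℂ, Module.End.eigenspace g μ := by
      rw [hdiag]; trivial
    exact (iSup_le hes) hmem
end

section
/- Let F_0 be any friend of 𝒱* and let ℛ* be the smallest (A+BF_0)-invariant subspace containing 𝒱* ∩ B(ker D) (this subspace does not depend on the choice of the friend F_0). Assume ℛ* ≠ 0 and suppose there exists ℓ with ℛ* = 𝒱* ∩ 𝒮_ℓ; let h := min{ℓ ≥ 1 : ℛ* = 𝒱* ∩ 𝒮_ℓ}. Then the set 𝒯₂ := {q ∈ ℕ : ∃ F a friend of ℛ* such that the restriction of A+BF to ℛ* is diagonalizable and has exactly q distinct eigenvalues} is nonempty and h = min 𝒯₂. -/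
open Matrix Submodule

/-- reachability-type sequence -/
noncomputable def fseq {V : Type*} [AddCommGroup V] [Module ℂ V]
    (g : V →ₗ[ℂ] V) (W : Submodule ℂ V) : ℕ → Submodule ℂ V
  | 0 => ⊥
  | (j + 1) => W ⊔ Submodule.map g (fseq g W j)

variable {V : Type*} [AddCommGroup V] [Module ℂ V] (g : V →ₗ[ℂ] V) (W : Submodule ℂ V)

lemma fseq_succ (j : ℕ) : fseq g W (j+1) = W ⊔ Submodule.map g (fseq g W j) := rfl

lemma fseq_mono (j : ℕ) : fseq g W j ≤ fseq g W (j+1) := by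
  induction j with
  | zero => exact bot_le
  | succ j ih => exact sup_le le_sup_left (le_sup_of_le_right (Submodule.map_mono ih))

lemma fseq_le_fseq {i j : ℕ} (hij : i ≤ j) : fseq g W i ≤ fseq g W j :=
  monotone_nat_of_le_succ (fseq_mono g W) hij

lemma W_le_fseq {j : ℕ} (hj : 1 ≤ j) : W ≤ fseq g W j :=
  le_trans le_sup_left (fseq_le_fseq g W hj)

lemma fseq_le (T : Submodule ℂ V) (hWT : W ≤ T) (hT : ∀ x ∈ T, g x ∈ T) :
    ∀ j, fseq g W j ≤ T := by
  intro j
  induction j with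
  | zero => exact bot_le
  | succ j ih =>
    refine sup_le hWT ?_
    rintro _ ⟨x, hx, rfl⟩
    exact hT x (ih hx)

lemma pow_mem_fseq (i : ℕ) (w : V) (hw : w ∈ W) : (g ^ i) w ∈ fseq g W (i+1) := by
  induction i with
  | zero => simpa using W_le_fseq g W le_rfl hw
  | succ i ih =>
    have : (g ^ (i+1)) w = g ((g ^ i) w) := by rw [pow_succ']; rfl
    rw [this]
    exact le_sup_right (α := Submodule ℂ V) (Submodule.mem_map_of_mem ih)

lemma fseq_le_of_pow (j : ℕ) : ∀ (T : Submodule ℂ V),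
    (∀ i < j, ∀ w ∈ W, (g ^ i) w ∈ T) → fseq g W j ≤ T := by
  induction j with
  | zero => intro T _; exact bot_le
  | succ j ih =>
    intro T hpow
    refine sup_le ?_ ?_
    · intro w hw
      simpa using hpow 0 (Nat.succ_pos j) w hw
    · rw [Submodule.map_le_iff_le_comap]
      refine ih (Submodule.comap g T) ?_
      intro i hi w hw
      rw [Submodule.mem_comap]
      have : g ((g ^ i) w) = (g ^ (i+1)) w := by rw [pow_succ']; rfl
      rw [this]
      exact hpow (i+1) (by omega) w hw

lemma fseq_stab {q : ℕ} (hq1 : 1 ≤ q) (hq : ∀ w ∈ W, (g ^ q) w ∈ fseq g W q) :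
    ∀ j, fseq g W j ≤ fseq g W q := by
  have hinv : ∀ x ∈ fseq g W q, g x ∈ fseq g W q := by
    have : fseq g W q ≤ Submodule.comap g (fseq g W q) := by
      refine fseq_le_of_pow g W q _ ?_
      intro i hi w hw
      rw [Submodule.mem_comap]
      have : g ((g ^ i) w) = (g ^ (i+1)) w := by rw [pow_succ']; rfl
      rw [this]
      rcases Nat.lt_or_ge (i+1) q with h' | h'
      · exact fseq_le_fseq g W (by omega) (pow_mem_fseq g W (i+1) w hw)
      · have : i + 1 = q := by omega
        rw [this]; exact hq w hw
    intro x hx; exact this hx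
  intro j
  induction j with
  | zero => exact bot_le
  | succ j ih =>
    refine sup_le (W_le_fseq g W hq1) ?_
    rintro _ ⟨x, hx, rfl⟩
    exact hinv x (ih hx)

/-- Powers beyond the degree of an annihilating polynomial stay in the reach. -/
lemma pow_apply_mem (P : Polynomial ℂ) (hm : P.Monic) (h0 : Polynomial.aeval g P = 0)
    (T : Submodule ℂ V) (w : V) (hT : ∀ i < P.natDegree, (g ^ i) w ∈ T) :
    (g ^ P.natDegree) w ∈ T := by
  set q := P.natDegree with hq
  have hgq : (g ^ q) w = (Polynomial.aeval g (Polynomial.X ^ q - P)) w := by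
    rw [map_sub, Polynomial.aeval_X_pow, LinearMap.sub_apply, h0]
    simp
  by_cases hr : (Polynomial.X ^ q - P : Polynomial ℂ) = 0
  · rw [hgq, hr]; simpa using T.zero_mem
  · have hdeg : (Polynomial.X ^ q - P).natDegree < q ∨ q = 0 := by
      rcases Nat.eq_zero_or_pos q with h | h
      · right; exact h
      · left
        have hd : (Polynomial.X ^ q - P).degree < ((q : ℕ) : WithBot ℕ) := by
          have hP0 : P ≠ 0 := hm.ne_zero
          have h1 : (Polynomial.X ^ q : Polynomial ℂ).degree = P.degree := by
            rw [Polynomial.degree_X_pow, Polynomial.degree_eq_natDegree hP0]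
          have h2 : (Polynomial.X ^ q : Polynomial ℂ) ≠ 0 :=
            pow_ne_zero _ Polynomial.X_ne_zero
          have h3 : (Polynomial.X ^ q : Polynomial ℂ).leadingCoeff = P.leadingCoeff := by
            rw [Polynomial.leadingCoeff_X_pow, hm.leadingCoeff]
          have := Polynomial.degree_sub_lt h1 h2 h3
          rwa [Polynomial.degree_X_pow] at this
        exact (Polynomial.natDegree_lt_iff_degree_lt hr).2 hd
    rcases hdeg with hdeg | hdeg
    · rw [hgq, Polynomial.aeval_eq_sum_range' (lt_of_lt_of_le hdeg le_rfl)]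
      rw [LinearMap.sum_apply]
      refine Submodule.sum_mem T ?_
      intro i hi
      rw [LinearMap.smul_apply]
      exact Submodule.smul_mem T _ (hT i (Finset.mem_range.mp hi))
    · -- q = 0 : P = 1 monic, aeval = 1 = 0, so w = 0
      have : P = 1 := Polynomial.eq_one_of_monic_natDegree_zero hm (by omega)
      rw [this] at h0
      have : w = 0 := by
        have := congrArg (fun f => f w) h0
        simpa using this
      rw [hdeg, this]
      simpa using T.zero_mem

/-- A diagonalizable endomorphism is annihilated by the product over its eigenvalues. -/
lemma aeval_prod_eq_zero (hdiag : (⨆ μ : ℂ, Module.End.eigenspace g μ) = ⊤)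
    (s : Finset ℂ) (hs : ∀ μ : ℂ, Module.End.HasEigenvalue g μ → μ ∈ s) :
    Polynomial.aeval g (∏ μ ∈ s, (Polynomial.X - Polynomial.C μ)) = 0 := by
  rw [← LinearMap.ker_eq_top, eq_top_iff, ← hdiag]
  refine iSup_le fun μ => ?_
  by_cases hμ : Module.End.HasEigenvalue g μ
  · intro x hx
    rw [LinearMap.mem_ker, ← Finset.prod_erase_mul s _ (hs μ hμ), _root_.map_mul,
      Module.End.mul_apply]
    have hgx : (Polynomial.aeval g (Polynomial.X - Polynomial.C μ)) x = 0 := by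
      rw [map_sub, Polynomial.aeval_X, Polynomial.aeval_C, LinearMap.sub_apply,
        Module.algebraMap_end_apply, Module.End.mem_eigenspace_iff.mp hx, sub_self]
    rw [hgx, map_zero]
  · have : Module.End.eigenspace g μ = ⊥ := not_not.mp hμ
    rw [this]; exact bot_le

section MatrixPart

variable {n m p : ℕ}

/-- Extend a linear map defined on a submodule of `ℂ^n` to a matrix. -/
lemma exists_matrix_extend (P : Submodule ℂ (Fin n → ℂ)) (f : ↥P →ₗ[ℂ] (Fin m → ℂ)) :
    ∃ G : Matrix (Fin m) (Fin n) ℂ, ∀ x : ↥P, G.mulVecLin ↑x = f x := by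
  obtain ⟨Q, hQ⟩ := Submodule.exists_isCompl P
  refine ⟨LinearMap.toMatrix' (LinearMap.ofIsCompl hQ f 0), fun x => ?_⟩
  have h1 : (LinearMap.toMatrix' (LinearMap.ofIsCompl hQ f 0)).mulVecLin
      = LinearMap.ofIsCompl hQ f 0 := by
    rw [← Matrix.toLin'_apply', Matrix.toLin'_toMatrix']
  rw [h1, LinearMap.ofIsCompl_left_apply]

lemma mulVecLin_add_mul (A : Matrix (Fin n) (Fin n) ℂ) (B : Matrix (Fin n) (Fin m) ℂ)
    (F : Matrix (Fin m) (Fin n) ℂ) (x : Fin n → ℂ) :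
    (A + B * F).mulVecLin x = A.mulVecLin x + B.mulVecLin (F.mulVecLin x) := by
  rw [Matrix.mulVecLin_add, Matrix.mulVecLin_mul]
  rfl

lemma mulVecLin_add_mul' (C : Matrix (Fin p) (Fin n) ℂ) (D : Matrix (Fin p) (Fin m) ℂ)
    (F : Matrix (Fin m) (Fin n) ℂ) (x : Fin n → ℂ) :
    (C + D * F).mulVecLin x = C.mulVecLin x + D.mulVecLin (F.mulVecLin x) := by
  rw [Matrix.mulVecLin_add, Matrix.mulVecLin_mul]
  rfl

/-- A subspace admitting a pointwise output-nulling control admits a (linear) friend. -/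
lemma isOutputNulling_of_pointwise (A : Matrix (Fin n) (Fin n) ℂ) (B : Matrix (Fin n) (Fin m) ℂ)
    (C : Matrix (Fin p) (Fin n) ℂ) (D : Matrix (Fin p) (Fin m) ℂ) (P : Submodule ℂ (Fin n → ℂ))
    (hP : ∀ x ∈ P, ∃ v, A.mulVecLin x + B.mulVecLin v ∈ P ∧
      C.mulVecLin x + D.mulVecLin v = 0) :
    IsOutputNulling A B C D P := by
  let bP := Module.Basis.ofVectorSpace ℂ ↥P
  let vch : Module.Basis.ofVectorSpaceIndex ℂ ↥P → (Fin m → ℂ) :=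
    fun i => (hP _ (bP i).2).choose
  obtain ⟨G, hG⟩ := exists_matrix_extend P (bP.constr ℂ vch)
  have hGb : ∀ i, G.mulVecLin ↑(bP i) = vch i := by
    intro i; rw [hG, Module.Basis.constr_basis]
  refine ⟨G, ?_, ?_⟩
  · -- invariance
    have hθ : (P.mkQ.comp (((A + B * G).mulVecLin).comp P.subtype)) = 0 := by
      refine bP.ext fun i => ?_
      have := (hP _ (bP i).2).choose_spec.1
      simp only [LinearMap.comp_apply, Submodule.subtype_apply, LinearMap.zero_apply]
      rw [mulVecLin_add_mul, hGb]
      rw [Submodule.mkQ_apply, Submodule.Quotient.mk_eq_zero]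
      exact this
    intro x hx
    have := congrArg (fun f => f (⟨x, hx⟩ : ↥P)) hθ
    simp only [LinearMap.comp_apply, Submodule.subtype_apply, LinearMap.zero_apply,
      Submodule.mkQ_apply, Submodule.Quotient.mk_eq_zero] at this
    exact this
  · -- kernel
    have hξ : (((C + D * G).mulVecLin).comp P.subtype) = 0 := by
      refine bP.ext fun i => ?_
      have := (hP _ (bP i).2).choose_spec.2
      simp only [LinearMap.comp_apply, Submodule.subtype_apply, LinearMap.zero_apply]
      rw [mulVecLin_add_mul', hGb]
      exact this
    intro x hx
    have := congrArg (fun f => f (⟨x, hx⟩ : ↥P)) hξ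
    simpa using this

lemma mem_sSeq_succ (A : Matrix (Fin n) (Fin n) ℂ) (B : Matrix (Fin n) (Fin m) ℂ)
    (C : Matrix (Fin p) (Fin n) ℂ) (D : Matrix (Fin p) (Fin m) ℂ) (j : ℕ) (z : Fin n → ℂ) :
    z ∈ sSeq A B C D (j+1) ↔ ∃ x u, x ∈ sSeq A B C D j ∧
      C.mulVecLin x + D.mulVecLin u = 0 ∧ A.mulVecLin x + B.mulVecLin u = z := by
  show z ∈ Submodule.map _ _ ↔ _
  simp only [Submodule.mem_map, Submodule.mem_inf, Submodule.mem_prod, Submodule.mem_top,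
    and_true, LinearMap.mem_ker, LinearMap.coprod_apply]
  constructor
  · rintro ⟨⟨x, u⟩, ⟨hx, hker⟩, hz⟩; exact ⟨x, u, hx, hker, hz⟩
  · rintro ⟨x, u, hx, hker, hz⟩; exact ⟨⟨x, u⟩, ⟨hx, hker⟩, hz⟩

lemma sSeq_mono (A : Matrix (Fin n) (Fin n) ℂ) (B : Matrix (Fin n) (Fin m) ℂ)
    (C : Matrix (Fin p) (Fin n) ℂ) (D : Matrix (Fin p) (Fin m) ℂ) :
    ∀ j, sSeq A B C D j ≤ sSeq A B C D (j+1) := by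
  intro j
  induction j with
  | zero => exact bot_le
  | succ j ih =>
    intro z hz
    rw [mem_sSeq_succ] at hz ⊢
    obtain ⟨x, u, hx, hker, hz⟩ := hz
    exact ⟨x, u, ih hx, hker, hz⟩

lemma sSeq_le_sSeq (A : Matrix (Fin n) (Fin n) ℂ) (B : Matrix (Fin n) (Fin m) ℂ)
    (C : Matrix (Fin p) (Fin n) ℂ) (D : Matrix (Fin p) (Fin m) ℂ) {i j : ℕ} (hij : i ≤ j) :
    sSeq A B C D i ≤ sSeq A B C D j :=
  monotone_nat_of_le_succ (sSeq_mono A B C D) hij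

/-- Relation between the ambient reachability sequence and the one restricted to `Rst`. -/
lemma seq_subtype {Rst W : Submodule ℂ (Fin n → ℂ)} (hW : W ≤ Rst)
    {M N : (Fin n → ℂ) →ₗ[ℂ] (Fin n → ℂ)} (hMinv : ∀ x ∈ Rst, M x ∈ Rst)
    (hNinv : ∀ x ∈ Rst, N x ∈ Rst) (hMN : ∀ x ∈ Rst, N x - M x ∈ W) :
    ∀ j, Submodule.map Rst.subtype
      (fseq (N.restrict hNinv) (W.comap Rst.subtype) j) = fseq M W j := by
  have hfle : ∀ j, fseq M W j ≤ Rst :=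
    fseq_le M W Rst hW hMinv
  intro j
  induction j with
  | zero => exact Submodule.map_bot _
  | succ j ih =>
    rw [fseq_succ, fseq_succ, Submodule.map_sup]
    have h1 : Submodule.map Rst.subtype (W.comap Rst.subtype) = W := by
      rw [Submodule.map_comap_subtype, inf_eq_right.mpr hW]
    have h2 : Submodule.map Rst.subtype
        (Submodule.map (N.restrict hNinv) (fseq (N.restrict hNinv) (W.comap Rst.subtype) j))
        = Submodule.map N (fseq M W j) := by
      rw [← Submodule.map_comp, LinearMap.subtype_comp_restrict, ← ih]
      rw [← Submodule.map_comp]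
      rfl
    rw [h1, h2]
    -- W ⊔ map N (fseq M W j) = W ⊔ map M (fseq M W j)
    have hle : fseq M W j ≤ Rst := hfle j
    refine le_antisymm (sup_le le_sup_left ?_) (sup_le le_sup_left ?_)
    · rintro _ ⟨x, hx, rfl⟩
      have : N x = (N x - M x) + M x := by ring
      rw [this]
      exact Submodule.add_mem _ (Submodule.mem_sup_left (hMN x (hle hx)))
        (Submodule.mem_sup_right (Submodule.mem_map_of_mem hx))
    · rintro _ ⟨x, hx, rfl⟩
      have : M x = (-(N x - M x)) + N x := by ring
      rw [this]
      exact Submodule.add_mem _ (Submodule.mem_sup_left (Submodule.neg_mem _ (hMN x (hle hx))))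
        (Submodule.mem_sup_right (Submodule.mem_map_of_mem hx))

end MatrixPart

set_option maxHeartbeats 1000000 in
theorem min_steps_rStar_eq_min_distinct_eigs (n m p : ℕ)
    (hn : 0 < n) (hm : 0 < m) (hp : 0 < p)
    (A : Matrix (Fin n) (Fin n) ℂ) (B : Matrix (Fin n) (Fin m) ℂ)
    (C : Matrix (Fin p) (Fin n) ℂ) (D : Matrix (Fin p) (Fin m) ℂ)
    -- F₀ is a friend of 𝒱*
    (F₀ : Matrix (Fin m) (Fin n) ℂ)
    (hF₀inv : ∀ x ∈ vStar A B C D, (A + B * F₀).mulVecLin x ∈ vStar A B C D)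
    (hF₀ker : vStar A B C D ≤ LinearMap.ker (C + D * F₀).mulVecLin)
    -- ℛ* : the smallest (A + BF₀)-invariant subspace containing 𝒱* ∩ B(ker D)
    (Rstar : Submodule ℂ (Fin n → ℂ))
    (hRstar : Rstar = sInf {W : Submodule ℂ (Fin n → ℂ) |
      vStar A B C D ⊓ Submodule.map B.mulVecLin (LinearMap.ker D.mulVecLin) ≤ W ∧
      Submodule.map (A + B * F₀).mulVecLin W ≤ W})
    (hRne : Rstar ≠ ⊥)
    (h : ℕ)
    (hmin : IsLeast {ℓ : ℕ | 1 ≤ ℓ ∧ Rstar = vStar A B C D ⊓ sSeq A B C D ℓ} h) :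
    IsLeast {q : ℕ | ∃ (F : Matrix (Fin m) (Fin n) ℂ)
        (hinv : ∀ x ∈ Rstar, (A + B * F).mulVecLin x ∈ Rstar),
        Rstar ≤ LinearMap.ker (C + D * F).mulVecLin ∧
        IsDiagonalizable ((A + B * F).mulVecLin.restrict hinv) ∧
        {μ : ℂ | Module.End.HasEigenvalue ((A + B * F).mulVecLin.restrict hinv) μ}.ncard = q}
      h := by
  classical
  set V := vStar A B C D with hV
  set M := (A + B * F₀).mulVecLin with hM
  set W : Submodule ℂ (Fin n → ℂ) :=
    V ⊓ Submodule.map B.mulVecLin (LinearMap.ker D.mulVecLin) with hWdef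
  -- basic facts about Rstar
  have hWR : W ≤ Rstar := by rw [hRstar]; exact le_sInf fun T hT => hT.1
  have hMRstar : Submodule.map M Rstar ≤ Rstar := by
    conv_lhs => rw [hRstar]
    rw [hRstar]
    refine le_sInf fun T hT => ?_
    exact le_trans (Submodule.map_mono (sInf_le hT)) hT.2
  have hMR : ∀ x ∈ Rstar, M x ∈ Rstar := fun x hx => hMRstar (Submodule.mem_map_of_mem hx)
  have hRV : Rstar ≤ V := by
    rw [hRstar]
    exact sInf_le ⟨inf_le_left, Submodule.map_le_iff_le_comap.2 fun x hx => hF₀inv x hx⟩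
  -- the fixpoint property of V = 𝒱*
  have hfix : ∀ (z : Fin n → ℂ) (v : Fin m → ℂ), A.mulVecLin z + B.mulVecLin v ∈ V →
      C.mulVecLin z + D.mulVecLin v = 0 → z ∈ V := by
    set Pm : Submodule ℂ (Fin n → ℂ) := Submodule.map (LinearMap.fst ℂ (Fin n → ℂ) (Fin m → ℂ))
      ((LinearMap.ker ((C.mulVecLin).coprod D.mulVecLin)) ⊓
        (Submodule.comap ((A.mulVecLin).coprod B.mulVecLin) V)) with hPmdef
    have hmemPm : ∀ (z' : Fin n → ℂ) (v' : Fin m → ℂ), A.mulVecLin z' + B.mulVecLin v' ∈ V →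
        C.mulVecLin z' + D.mulVecLin v' = 0 → z' ∈ Pm := by
      intro z' v' hAB hCD
      refine ⟨(z', v'), Submodule.mem_inf.mpr ⟨?_, ?_⟩, rfl⟩
      · rwa [LinearMap.mem_ker, LinearMap.coprod_apply]
      · rwa [Submodule.mem_comap, LinearMap.coprod_apply]
    have hPmmem : ∀ z' ∈ Pm, ∃ v', A.mulVecLin z' + B.mulVecLin v' ∈ V ∧
        C.mulVecLin z' + D.mulVecLin v' = 0 := by
      rintro _ ⟨⟨z', v'⟩, hmem', rfl⟩
      obtain ⟨hker', hcomap'⟩ := Submodule.mem_inf.mp hmem'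
      rw [LinearMap.mem_ker, LinearMap.coprod_apply] at hker'
      rw [Submodule.mem_comap, LinearMap.coprod_apply] at hcomap'
      exact ⟨v', hcomap', hker'⟩
    have hVP : V ≤ Pm := by
      intro x hx
      refine hmemPm x (F₀.mulVecLin x) ?_ ?_
      · rw [← mulVecLin_add_mul]; exact hF₀inv x hx
      · rw [← mulVecLin_add_mul']; exact LinearMap.mem_ker.mp (hF₀ker hx)
    have hON : IsOutputNulling A B C D Pm := by
      refine isOutputNulling_of_pointwise A B C D Pm ?_
      intro x hx
      obtain ⟨v', hAB, hCD⟩ := hPmmem x hx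
      exact ⟨v', hVP hAB, hCD⟩
    have hPV : Pm ≤ V := by
      rw [hV]
      exact le_sSup hON
    intro z v hzv hcd
    exact hPV (hmemPm z v hzv hcd)
  -- the central induction : V ⊓ 𝒮_j = fseq M W j
  have hRS : ∀ j, V ⊓ sSeq A B C D j = fseq M W j := by
    intro j
    induction j with
    | zero =>
      show V ⊓ ⊥ = ⊥
      simp
    | succ j ih =>
      apply le_antisymm
      · rintro z hz
        obtain ⟨hzV, hzS⟩ := Submodule.mem_inf.mp hz
        rw [mem_sSeq_succ] at hzS
        obtain ⟨x, u, hx, hcd, hzeq⟩ := hzS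
        have hxV : x ∈ V := hfix x u (by rw [hzeq]; exact hzV) hcd
        have hxf : x ∈ fseq M W j := by
          rw [← ih]; exact Submodule.mem_inf.mpr ⟨hxV, hx⟩
        have hMxV : M x ∈ V := hF₀inv x hxV
        have hF₀x : C.mulVecLin x + D.mulVecLin (F₀.mulVecLin x) = 0 := by
          rw [← mulVecLin_add_mul']; exact LinearMap.mem_ker.mp (hF₀ker hxV)
        have hdiff : z - M x ∈ W := by
          refine Submodule.mem_inf.mpr ⟨sub_mem hzV hMxV, ?_⟩
          have hBd : z - M x = B.mulVecLin (u - F₀.mulVecLin x) := by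
            rw [map_sub, ← hzeq, hM, mulVecLin_add_mul]; abel
          rw [hBd]
          refine Submodule.mem_map_of_mem ?_
          rw [LinearMap.mem_ker, map_sub]
          have hDD : D.mulVecLin u - D.mulVecLin (F₀.mulVecLin x) =
              (C.mulVecLin x + D.mulVecLin u) -
              (C.mulVecLin x + D.mulVecLin (F₀.mulVecLin x)) := by abel
          rw [hDD, hcd, hF₀x, sub_zero]
        have hzsum : z = (z - M x) + M x := by abel
        rw [fseq_succ, hzsum]
        exact Submodule.add_mem _ (Submodule.mem_sup_left hdiff)
          (Submodule.mem_sup_right (Submodule.mem_map_of_mem hxf))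
      · rw [fseq_succ]
        refine sup_le ?_ ?_
        · rintro w hw
          obtain ⟨hwV, hwB⟩ := Submodule.mem_inf.mp hw
          refine Submodule.mem_inf.mpr ⟨hwV, ?_⟩
          obtain ⟨u, hu, huw⟩ := hwB
          rw [mem_sSeq_succ]
          refine ⟨0, u, Submodule.zero_mem _, ?_, ?_⟩
          · rw [map_zero, zero_add]; exact hu
          · rw [map_zero, zero_add]; exact huw
        · rintro _ ⟨x, hx, rfl⟩
          rw [← ih] at hx
          obtain ⟨hxV, hxS⟩ := Submodule.mem_inf.mp hx
          refine Submodule.mem_inf.mpr ⟨hF₀inv x hxV, ?_⟩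
          rw [mem_sSeq_succ]
          refine ⟨x, F₀.mulVecLin x, hxS, ?_, ?_⟩
          · rw [← mulVecLin_add_mul']; exact LinearMap.mem_ker.mp (hF₀ker hxV)
          · rw [hM, mulVecLin_add_mul]
  -- reformulate the minimality of h
  have hminR : IsLeast {ℓ : ℕ | 1 ≤ ℓ ∧ fseq M W ℓ = Rstar} h := by
    have hsets : {ℓ : ℕ | 1 ≤ ℓ ∧ Rstar = V ⊓ sSeq A B C D ℓ} =
        {ℓ : ℕ | 1 ≤ ℓ ∧ fseq M W ℓ = Rstar} := by
      ext ℓ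
      simp only [Set.mem_setOf_eq]
      constructor
      · rintro ⟨h1, h2⟩; exact ⟨h1, (hRS ℓ).symm.trans h2.symm⟩
      · rintro ⟨h1, h2⟩; exact ⟨h1, ((hRS ℓ).trans h2).symm⟩
    rw [← hsets]
    exact hmin
  haveI : Nontrivial ↥Rstar := Submodule.nontrivial_iff_ne_bot.mpr hRne
  -- the lower bound : any friend with diagonalizable restriction has at least h eigenvalues
  have lower : ∀ (q' : ℕ) (F : Matrix (Fin m) (Fin n) ℂ)
      (hinv : ∀ x ∈ Rstar, (A + B * F).mulVecLin x ∈ Rstar),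
      Rstar ≤ LinearMap.ker (C + D * F).mulVecLin →
      IsDiagonalizable ((A + B * F).mulVecLin.restrict hinv) →
      {μ : ℂ | Module.End.HasEigenvalue ((A + B * F).mulVecLin.restrict hinv) μ}.ncard = q' →
      h ≤ q' := by
    intro q' F hinv hker hdiag hcard
    set N := (A + B * F).mulVecLin with hN
    set g := N.restrict hinv with hg
    have hMN : ∀ x ∈ Rstar, N x - M x ∈ W := by
      intro x hx
      refine Submodule.mem_inf.mpr ⟨sub_mem (hRV (hinv x hx)) (hRV (hMR x hx)), ?_⟩
      have hdiffB : N x - M x = B.mulVecLin (F.mulVecLin x - F₀.mulVecLin x) := by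
        rw [map_sub, hN, hM, mulVecLin_add_mul, mulVecLin_add_mul]; abel
      rw [hdiffB]
      refine Submodule.mem_map_of_mem ?_
      rw [LinearMap.mem_ker, map_sub]
      have h1 : C.mulVecLin x + D.mulVecLin (F.mulVecLin x) = 0 := by
        rw [← mulVecLin_add_mul']; exact LinearMap.mem_ker.mp (hker hx)
      have h2 : C.mulVecLin x + D.mulVecLin (F₀.mulVecLin x) = 0 := by
        rw [← mulVecLin_add_mul']; exact LinearMap.mem_ker.mp (hF₀ker (hRV hx))
      have hDD : D.mulVecLin (F.mulVecLin x) - D.mulVecLin (F₀.mulVecLin x) =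
          (C.mulVecLin x + D.mulVecLin (F.mulVecLin x)) -
          (C.mulVecLin x + D.mulVecLin (F₀.mulVecLin x)) := by abel
      rw [hDD, h1, h2, sub_zero]
    have hmap := seq_subtype hWR hMR hinv hMN
    have hEfin : {μ : ℂ | Module.End.HasEigenvalue g μ}.Finite :=
      Module.End.finite_hasEigenvalue g
    have hq1 : 1 ≤ q' := by
      obtain ⟨μ0, hμ0⟩ := Module.End.exists_eigenvalue g
      have : 0 < q' := hcard ▸ (Set.ncard_pos hEfin).mpr ⟨μ0, hμ0⟩
      omega
    set s : Finset ℂ := hEfin.toFinset with hsdef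
    have hsq : s.card = q' := by
      rw [← hcard, Set.ncard_eq_toFinset_card _ hEfin]
    set P : Polynomial ℂ := ∏ μ ∈ s, (Polynomial.X - Polynomial.C μ) with hPdef
    have hmonic : P.Monic :=
      Polynomial.monic_prod_of_monic _ _ fun μ _ => Polynomial.monic_X_sub_C μ
    have hdeg : P.natDegree = q' := by
      rw [hPdef, Polynomial.natDegree_prod_of_monic _ _ (fun μ _ => Polynomial.monic_X_sub_C μ)]
      simp [Polynomial.natDegree_X_sub_C, hsq]
    have hP0 : Polynomial.aeval g P = 0 :=
      aeval_prod_eq_zero g hdiag s (fun μ hμ => hEfin.mem_toFinset.mpr hμ)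
    set W' := Submodule.comap Rstar.subtype W with hW'def
    have hstab : ∀ j, fseq g W' j ≤ fseq g W' q' := by
      refine fseq_stab g W' hq1 ?_
      intro w hw
      have hpm : (g ^ P.natDegree) w ∈ fseq g W' q' := by
        refine pow_apply_mem g P hmonic hP0 _ w ?_
        intro i hi
        have hiq : i + 1 ≤ q' := by omega
        exact fseq_le_fseq g W' hiq (pow_mem_fseq g W' i w hw)
      rwa [hdeg] at hpm
    have hfh : fseq M W h = Rstar := hminR.1.2
    have hfq : fseq M W q' = Rstar := by
      refine le_antisymm (fseq_le M W Rstar hWR hMR q') ?_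
      rw [← hfh, ← hmap h, ← hmap q']
      exact Submodule.map_mono (hstab h)
    exact hminR.2 ⟨hq1, hfq⟩
  constructor
  · -- membership : construct a friend with exactly h distinct eigenvalues
    have hMN₀ : ∀ x ∈ Rstar, M x - M x ∈ W := by
      intro x _; rw [sub_self]; exact W.zero_mem
    have hmap₀ := seq_subtype hWR hMR hMR hMN₀
    set g₀ := M.restrict hMR with hg₀
    set W' := Submodule.comap Rstar.subtype W with hW'def
    -- pick h scalars that are not eigenvalues of g₀
    have hEfin₀ : {μ : ℂ | Module.End.HasEigenvalue g₀ μ}.Finite :=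
      Module.End.finite_hasEigenvalue g₀
    obtain ⟨sset, hsub, hsfin, hscard⟩ :=
      (hEfin₀.infinite_compl).exists_subset_ncard_eq h
    set s : Finset ℂ := hsfin.toFinset with hsdef
    have hscard' : s.card = h := by rw [← hscard, Set.ncard_eq_toFinset_card _ hsfin]
    have hsnot : ∀ μ ∈ s, ¬ Module.End.HasEigenvalue g₀ μ := by
      intro μ hμ
      have : μ ∈ sset := hsfin.mem_toFinset.mp hμ
      exact hsub this
    -- the maps T_μ = g₀ - μ are bijective for μ ∈ s
    have hTev : ∀ μ : ℂ, Polynomial.aeval g₀ (Polynomial.X - Polynomial.C μ) = g₀ - μ • 1 := by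
      intro μ
      rw [map_sub, Polynomial.aeval_X, Polynomial.aeval_C, Algebra.algebraMap_eq_smul_one]
    have hTbij : ∀ μ ∈ s, Function.Bijective
        ⇑(Polynomial.aeval g₀ (Polynomial.X - Polynomial.C μ)) := by
      intro μ hμ
      have hinj : Function.Injective
          ⇑(Polynomial.aeval g₀ (Polynomial.X - Polynomial.C μ)) := by
        rw [hTev, ← LinearMap.ker_eq_bot]
        have hne := hsnot μ hμ
        rw [Module.End.hasEigenvalue_iff, not_not, Module.End.eigenspace_def] at hne
        exact hne
      exact ⟨hinj, LinearMap.injective_iff_surjective.mp hinj⟩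
    -- the product map Q is bijective
    have hprodbij : ∀ t : Finset ℂ,
        (∀ μ ∈ t, Function.Bijective ⇑(Polynomial.aeval g₀ (Polynomial.X - Polynomial.C μ))) →
        Function.Bijective
          ⇑(Polynomial.aeval g₀ (∏ μ ∈ t, (Polynomial.X - Polynomial.C μ))) := by
      intro t
      induction t using Finset.cons_induction with
      | empty => intro _; rw [Finset.prod_empty, _root_.map_one]; exact Function.bijective_id
      | cons a t ha ih =>
        intro hyp
        rw [Finset.prod_cons, _root_.map_mul]
        have hco : ⇑(Polynomial.aeval g₀ (Polynomial.X - Polynomial.C a) *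
            Polynomial.aeval g₀ (∏ μ ∈ t, (Polynomial.X - Polynomial.C μ))) =
            ⇑(Polynomial.aeval g₀ (Polynomial.X - Polynomial.C a)) ∘
            ⇑(Polynomial.aeval g₀ (∏ μ ∈ t, (Polynomial.X - Polynomial.C μ))) := rfl
        rw [hco]
        exact (hyp a (Finset.mem_cons_self a t)).comp
          (ih fun μ hμ => hyp μ (Finset.mem_cons.mpr (Or.inr hμ)))
    set Qe : Module.End ℂ ↥Rstar :=
      Polynomial.aeval g₀ (∏ μ ∈ s, (Polynomial.X - Polynomial.C μ)) with hQedef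
    have hQbij : Function.Bijective ⇑Qe := hprodbij s hTbij
    -- the subspaces U μ
    set U : {μ : ℂ // μ ∈ s} → Submodule ℂ ↥Rstar := fun μ =>
      Submodule.comap (Polynomial.aeval g₀ (Polynomial.X - Polynomial.C μ.1)) W' with hUdef
    -- fseq g₀ W' h = ⊤
    have hfh : fseq g₀ W' h = ⊤ := by
      have h1 : Submodule.map Rstar.subtype (fseq g₀ W' h) = Submodule.map Rstar.subtype ⊤ := by
        rw [hmap₀ h, hminR.1.2, Submodule.map_top, Submodule.range_subtype]
      exact Submodule.map_injective_of_injective (Submodule.injective_subtype Rstar) h1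
    -- every vector lies in the span of the U μ
    have hUsup : (⨆ μ : {μ : ℂ // μ ∈ s}, U μ) = ⊤ := by
      refine le_antisymm le_top ?_
      intro x _
      have hle : fseq g₀ W' h ≤ Submodule.map Qe (⨆ μ : {μ : ℂ // μ ∈ s}, U μ) := by
        refine fseq_le_of_pow g₀ W' h _ ?_
        intro i hi w hw
        have hdegXi : (Polynomial.X ^ i : Polynomial ℂ).degree < s.card := by
          rw [Polynomial.degree_X_pow, hscard']
          exact_mod_cast hi
        have hXi := Lagrange.eq_interpolate (s := s) (v := id) (Set.injOn_id _) hdegXi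
        have hgi : (g₀ ^ i) w =
            (Polynomial.aeval g₀ (Lagrange.interpolate s id
              fun μ => Polynomial.eval (id μ) (Polynomial.X ^ i))) w := by
          rw [← hXi, Polynomial.aeval_X_pow]
        rw [hgi, Lagrange.interpolate_apply, map_sum, LinearMap.sum_apply]
        refine Submodule.sum_mem _ ?_
        intro μ hμ
        -- each summand lies in map Qe (⨆ U)
        have hbasis : Lagrange.basis s id μ =
            Polynomial.C (∏ ν ∈ s.erase μ, (μ - ν)⁻¹) *
            ∏ ν ∈ s.erase μ, (Polynomial.X - Polynomial.C ν) := by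
          rw [Lagrange.basis]
          simp only [Lagrange.basisDivisor, id_eq]
          rw [Finset.prod_mul_distrib, ← map_prod]
        set c₁ : ℂ := Polynomial.eval (id μ) (Polynomial.X ^ i) with hc₁
        set c₂ : ℂ := ∏ ν ∈ s.erase μ, (μ - ν)⁻¹ with hc₂
        have hterm : (Polynomial.aeval g₀ (Polynomial.C c₁ * Lagrange.basis s id μ)) w =
            (c₁ * c₂) • ((Polynomial.aeval g₀
              (∏ ν ∈ s.erase μ, (Polynomial.X - Polynomial.C ν))) w) := by
          rw [hbasis, ← mul_assoc, ← map_mul (Polynomial.C), _root_.map_mul,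
            Polynomial.aeval_C, Module.End.mul_apply, Module.algebraMap_end_apply]
        rw [hterm]
        refine Submodule.smul_mem _ _ ?_
        -- the vector (aeval (∏ erase)) w is Qe of an element of U μ
        set Tμ := Polynomial.aeval g₀ (Polynomial.X - Polynomial.C μ) with hTμ
        have hbijμ := hTbij μ hμ
        set eqv := LinearEquiv.ofBijective Tμ hbijμ with heqv
        set u : ↥Rstar := eqv.symm w with hu
        have hu1 : Tμ u = w := by
          have := eqv.apply_symm_apply w
          rwa [heqv] at this
        have huU : u ∈ U ⟨μ, hμ⟩ := by
          rw [hUdef]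
          show Tμ u ∈ W'
          rw [hu1]; exact hw
        have hQu : Qe u = (Polynomial.aeval g₀
            (∏ ν ∈ s.erase μ, (Polynomial.X - Polynomial.C ν))) w := by
          rw [hQedef, ← Finset.prod_erase_mul s _ hμ, _root_.map_mul, Module.End.mul_apply, hu1]
        rw [← hQu]
        exact Submodule.mem_map_of_mem (Submodule.mem_iSup_of_mem ⟨μ, hμ⟩ huU)
      have hx' : Qe x ∈ Submodule.map Qe (⨆ μ : {μ : ℂ // μ ∈ s}, U μ) := by
        refine hle ?_
        rw [hfh]; exact Submodule.mem_top
      obtain ⟨u', hu', hequ⟩ := hx'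
      rwa [← hQbij.injective hequ]
    -- pick a basis of Rstar from the union of the U μ
    have hspan : Submodule.span ℂ (⋃ μ : {μ : ℂ // μ ∈ s}, (U μ : Set ↥Rstar)) = ⊤ := by
      rw [← Submodule.iSup_eq_span, hUsup]
    obtain ⟨bs, hbsub, hbspan, hbind⟩ :=
      exists_linearIndependent ℂ (⋃ μ : {μ : ℂ // μ ∈ s}, (U μ : Set ↥Rstar))
    rw [hspan] at hbspan
    obtain ⟨bR, hbRapp⟩ : ∃ bR : Module.Basis ↥bs ℂ ↥Rstar, ∀ i : ↥bs, bR i = (i : ↥Rstar) :=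
      ⟨Module.Basis.mk hbind (by rw [Subtype.range_coe]; exact hbspan.ge),
        fun i => Module.Basis.mk_apply hbind _ i⟩
    -- choose eigenvalue and control for each basis vector
    have hchoice : ∀ i : ↥bs, ∃ μ : {μ : ℂ // μ ∈ s}, (i : ↥Rstar) ∈ U μ := by
      intro i
      exact Set.mem_iUnion.mp (hbsub i.2)
    choose kk hkk using hchoice
    have hctrl : ∀ i : ↥bs, ∃ u : Fin m → ℂ, u ∈ LinearMap.ker D.mulVecLin ∧
        B.mulVecLin u = (kk i).1 • ((i : ↥Rstar) : Fin n → ℂ) -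
          M ((i : ↥Rstar) : Fin n → ℂ) := by
      intro i
      have h1 : (Polynomial.aeval g₀ (Polynomial.X - Polynomial.C (kk i).1)) (i : ↥Rstar) ∈ W' :=
        hkk i
      rw [hTev] at h1
      have h2 : M ((i : ↥Rstar) : Fin n → ℂ) - (kk i).1 • ((i : ↥Rstar) : Fin n → ℂ) ∈ W := by
        rw [hW'def, Submodule.mem_comap] at h1
        have hco : Rstar.subtype ((g₀ - (kk i).1 • 1) (i : ↥Rstar)) =
            M ((i : ↥Rstar) : Fin n → ℂ) - (kk i).1 • ((i : ↥Rstar) : Fin n → ℂ) := by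
          simp only [LinearMap.sub_apply, LinearMap.smul_apply, Module.End.one_apply,
            Submodule.subtype_apply, Submodule.coe_sub, SetLike.val_smul]
          rw [hg₀, LinearMap.restrict_coe_apply]
        rwa [hco] at h1
      have h3 : (kk i).1 • ((i : ↥Rstar) : Fin n → ℂ) - M ((i : ↥Rstar) : Fin n → ℂ) ∈ W := by
        have := W.neg_mem h2
        rwa [neg_sub] at this
      obtain ⟨u, hu, huB⟩ := (Submodule.mem_inf.mp h3).2
      exact ⟨u, hu, huB⟩
    choose uu huuD huuB using hctrl
    obtain ⟨φ, hφb⟩ : ∃ φ : ↥Rstar →ₗ[ℂ] (Fin m → ℂ), ∀ i : ↥bs, φ (bR i) = uu i :=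
      ⟨bR.constr ℂ uu, fun i => bR.constr_basis ℂ uu i⟩
    obtain ⟨G, hG⟩ := exists_matrix_extend Rstar φ
    have hGb : ∀ i : ↥bs, G.mulVecLin ((i : ↥Rstar) : Fin n → ℂ) = uu i := by
      intro i
      have := hG (i : ↥Rstar)
      rw [this, ← hbRapp i, hφb]
    -- the closed-loop map acts on the basis by scalars
    have hNx : ∀ x : ↥Rstar, (A + B * (F₀ + G)).mulVecLin ↑x =
        M ↑x + B.mulVecLin (G.mulVecLin ↑x) := by
      intro x
      rw [mulVecLin_add_mul, Matrix.mulVecLin_add, hM, mulVecLin_add_mul]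
      simp only [LinearMap.add_apply]
      rw [map_add]
      abel
    have hNb : ∀ i : ↥bs, (A + B * (F₀ + G)).mulVecLin ((i : ↥Rstar) : Fin n → ℂ) =
        (kk i).1 • ((i : ↥Rstar) : Fin n → ℂ) := by
      intro i
      rw [hNx, hGb, huuB]
      abel
    -- invariance
    have hinvR : ∀ x ∈ Rstar, (A + B * (F₀ + G)).mulVecLin x ∈ Rstar := by
      have hψ : (Rstar.mkQ.comp (((A + B * (F₀ + G)).mulVecLin).comp Rstar.subtype)) = 0 := by
        refine bR.ext fun i => ?_
        simp only [LinearMap.comp_apply, Submodule.subtype_apply, LinearMap.zero_apply]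
        rw [hbRapp, hNb, Submodule.mkQ_apply, Submodule.Quotient.mk_eq_zero]
        exact Submodule.smul_mem _ _ (SetLike.coe_mem _)
      intro x hx
      have := congrArg (fun f => f (⟨x, hx⟩ : ↥Rstar)) hψ
      simp only [LinearMap.comp_apply, Submodule.subtype_apply, LinearMap.zero_apply,
        Submodule.mkQ_apply, Submodule.Quotient.mk_eq_zero] at this
      exact this
    -- kernel condition
    have hkerR : Rstar ≤ LinearMap.ker (C + D * (F₀ + G)).mulVecLin := by
      have hCmat : ∀ x : ↥Rstar, (C + D * (F₀ + G)).mulVecLin ↑x =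
          (C + D * F₀).mulVecLin ↑x + D.mulVecLin (G.mulVecLin ↑x) := by
        intro x
        rw [mulVecLin_add_mul', Matrix.mulVecLin_add, mulVecLin_add_mul']
        simp only [LinearMap.add_apply]
        rw [map_add]
        abel
      have hξ : (((C + D * (F₀ + G)).mulVecLin).comp Rstar.subtype) = 0 := by
        refine bR.ext fun i => ?_
        simp only [LinearMap.comp_apply, Submodule.subtype_apply, LinearMap.zero_apply]
        rw [hbRapp, hCmat, hGb]
        have h1 : (C + D * F₀).mulVecLin ((i : ↥Rstar) : Fin n → ℂ) = 0 :=
          LinearMap.mem_ker.mp (hF₀ker (hRV (SetLike.coe_mem _)))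
        have h2 : D.mulVecLin (uu i) = 0 := LinearMap.mem_ker.mp (huuD i)
        rw [h1, h2, add_zero]
      intro x hx
      have := congrArg (fun f => f (⟨x, hx⟩ : ↥Rstar)) hξ
      simpa using this
    -- the restriction
    set gF := ((A + B * (F₀ + G)).mulVecLin).restrict hinvR with hgF
    have hgFb : ∀ i : ↥bs, gF (bR i) = (kk i).1 • bR i := by
      intro i
      apply Subtype.ext
      rw [hgF, LinearMap.restrict_coe_apply, hbRapp, hNb i]
      rfl
    have hdiagF : IsDiagonalizable gF := by
      show (⨆ μ : ℂ, Module.End.eigenspace gF μ) = ⊤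
      refine eq_top_iff.mpr ?_
      rw [← bR.span_eq, Submodule.span_le]
      rintro _ ⟨i, rfl⟩
      have hmem : bR i ∈ Module.End.eigenspace gF (kk i).1 :=
        Module.End.mem_eigenspace_iff.mpr (hgFb i)
      exact SetLike.mem_coe.mpr
        (le_iSup (fun μ => Module.End.eigenspace gF μ) (kk i).1 hmem)
    have hannF : Polynomial.aeval gF (∏ μ ∈ s, (Polynomial.X - Polynomial.C μ)) = 0 := by
      refine bR.ext fun i => ?_
      rw [← Finset.prod_erase_mul s _ (kk i).2, _root_.map_mul, Module.End.mul_apply]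
      have hz : (Polynomial.aeval gF (Polynomial.X - Polynomial.C (kk i).1)) (bR i) = 0 := by
        rw [map_sub, Polynomial.aeval_X, Polynomial.aeval_C, LinearMap.sub_apply,
          Module.algebraMap_end_apply, hgFb, sub_self]
      rw [hz, map_zero, LinearMap.zero_apply]
    have hEsub : {μ : ℂ | Module.End.HasEigenvalue gF μ} ⊆ ↑s := by
      intro μ hμ
      obtain ⟨v, hv⟩ := hμ.exists_hasEigenvector
      have h0 : Polynomial.eval μ (∏ ν ∈ s, (Polynomial.X - Polynomial.C ν)) • v = 0 := by
        rw [← Module.End.aeval_apply_of_hasEigenvector hv, hannF, LinearMap.zero_apply]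
      have hev : Polynomial.eval μ (∏ ν ∈ s, (Polynomial.X - Polynomial.C ν)) = 0 := by
        rcases smul_eq_zero.mp h0 with h' | h'
        · exact h'
        · exact absurd h' hv.2
      rw [Polynomial.eval_prod] at hev
      obtain ⟨ν, hν, hroot⟩ := Finset.prod_eq_zero_iff.mp hev
      simp only [Polynomial.eval_sub, Polynomial.eval_X, Polynomial.eval_C] at hroot
      have hμν : μ = ν := sub_eq_zero.mp hroot
      rw [Finset.mem_coe]
      rwa [hμν]
    have hcardle : {μ : ℂ | Module.End.HasEigenvalue gF μ}.ncard ≤ h := by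
      have := Set.ncard_le_ncard hEsub s.finite_toSet
      rwa [Set.ncard_coe_finset, hscard'] at this
    have hcardge : h ≤ {μ : ℂ | Module.End.HasEigenvalue gF μ}.ncard :=
      lower _ (F₀ + G) hinvR hkerR hdiagF rfl
    exact ⟨F₀ + G, hinvR, hkerR, hdiagF, le_antisymm hcardle hcardge⟩
  · rintro q ⟨F, hinv, hker, hdiag, hcard⟩
    exact lower q F hinv hker hdiag hcard
end

section
/- Let Δ be an n×n diagonal complex matrix whose diagonal entries take exactly h distinct values, and let H be an n×m complex matrix. Then the smallest Δ-invariant subspace of ℂ^n containing range H equals range H + Δ(range H) + ⋯ + Δ^{h−1}(range H). -/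
open Matrix Submodule Polynomial

theorem smallest_invariant_diag (n m h : ℕ) (hn : 0 < n) (hm : 0 < m) (hh : 0 < h)
    (d : Fin n → ℂ) (hd : (Set.range d).ncard = h)
    (H : Matrix (Fin n) (Fin m) ℂ) :
    sInf {W : Submodule ℂ (Fin n → ℂ) |
        LinearMap.range H.mulVecLin ≤ W ∧
        Submodule.map (Matrix.diagonal d).mulVecLin W ≤ W} =
      ⨆ k ∈ Finset.range h,
        Submodule.map ((Matrix.diagonal d).mulVecLin ^ k) (LinearMap.range H.mulVecLin) := by
  set T := (Matrix.diagonal d).mulVecLin with hT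
  set S := LinearMap.range H.mulVecLin with hS
  have hfin : (Set.range d).Finite := Set.finite_range d
  set s : Finset ℂ := hfin.toFinset with hs
  have hcard : s.card = h := by
    rw [Set.ncard_eq_toFinset_card _ hfin] at hd; exact hd
  set p : Polynomial ℂ := ∏ c ∈ s, (X - C c) with hp
  have hmonic : p.Monic := monic_prod_of_monic _ _ fun c _ => monic_X_sub_C c
  have hdeg : p.natDegree = h := by
    rw [hp, natDegree_prod _ _ fun c _ => X_sub_C_ne_zero c]
    simp [hcard]
  have key : ∀ i : Fin n, (d i) ^ h = ∑ k ∈ Finset.range h, (-(p.coeff k)) * (d i) ^ k := by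
    intro i
    have hroot : p.eval (d i) = 0 := by
      rw [hp, eval_prod]
      apply Finset.prod_eq_zero (Set.Finite.mem_toFinset hfin |>.mpr ⟨i, rfl⟩)
      simp
    have hdeg' : p.natDegree < h + 1 := by omega
    have heval := Polynomial.eval_eq_sum_range' hdeg' (d i)
    rw [Finset.sum_range_succ, hroot] at heval
    have hlead : p.coeff h = 1 := by
      rw [← hdeg]; exact hmonic.coeff_natDegree
    rw [hlead, one_mul] at heval
    have := eq_neg_of_add_eq_zero_right heval.symm
    rw [this, ← Finset.sum_neg_distrib]
    simp [neg_mul]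
  have hpow : ∀ (k : ℕ) (x : Fin n → ℂ) (i : Fin n), (T ^ k) x i = (d i) ^ k * x i := by
    intro k
    induction k with
    | zero => simp
    | succ k ih =>
      intro x i
      rw [pow_succ, Module.End.mul_apply, ih, hT, Matrix.mulVecLin_apply,
        Matrix.mulVec_diagonal, pow_succ]
      ring
  have hTh : ∀ x : Fin n → ℂ,
      (T ^ h) x = ∑ k ∈ Finset.range h, (-(p.coeff k)) • (T ^ k) x := by
    intro x
    funext i
    rw [hpow, key i, Finset.sum_apply, Finset.sum_mul]
    refine Finset.sum_congr rfl fun k _ => ?_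
    rw [Pi.smul_apply, smul_eq_mul, hpow]
    ring
  apply le_antisymm
  · apply sInf_le
    constructor
    · calc S = Submodule.map (T ^ 0) S := by simp [Module.End.one_eq_id]
        _ ≤ ⨆ k ∈ Finset.range h, Submodule.map (T ^ k) S :=
          le_iSup_of_le 0 (le_iSup_of_le (Finset.mem_range.mpr hh) le_rfl)
    · rw [Submodule.map_iSup]
      apply iSup_le
      intro k
      rw [Submodule.map_iSup]
      apply iSup_le
      intro hk
      rw [← Submodule.map_comp, ← Module.End.mul_eq_comp, ← pow_succ']
      rcases lt_or_eq_of_le (Nat.succ_le_of_lt (Finset.mem_range.mp hk)) with hlt | heq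
      · exact le_iSup_of_le (k + 1) (le_iSup_of_le (Finset.mem_range.mpr hlt) le_rfl)
      · rw [show k + 1 = h from heq]
        intro x hx
        rw [Submodule.mem_map] at hx
        obtain ⟨y, hy, rfl⟩ := hx
        rw [hTh]
        exact Submodule.sum_mem _ fun k hk' =>
          Submodule.smul_mem _ _
            (Submodule.mem_iSup_of_mem k
              (Submodule.mem_iSup_of_mem hk' (Submodule.mem_map_of_mem hy)))
  · apply le_sInf
    rintro W' ⟨hS', hinv⟩
    have main : ∀ k, Submodule.map (T ^ k) S ≤ W' := by
      intro k
      induction k with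
      | zero => simpa [Module.End.one_eq_id] using hS'
      | succ k ih =>
        rw [pow_succ', Module.End.mul_eq_comp, Submodule.map_comp]
        exact le_trans (Submodule.map_mono ih) hinv
    exact iSup₂_le fun k _ => main k
end

section
/- (Moore's theorem.) Let A ∈ ℝ^{n×n}, B ∈ ℝ^{n×m}, and let λ_1, …, λ_n be distinct complex numbers forming a self-conjugate set (for each i there is j with λ_j equal to the complex conjugate of λ_i). Let v_1, …, v_n ∈ ℂ^n be linearly independent over ℂ and satisfy: v_i equals the complex conjugate of v_j whenever λ_i equals the complex conjugate of λ_j. Then there exists a real matrix F ∈ ℝ^{m×n} such that (A + BF)v_i = λ_i v_i for all i ∈ {1,…,n} (with A, B, F acting on ℂ^n via their complexifications) if and only if v_i ∈ V(λ_i) for all i ∈ {1,…,n}. -/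
open Matrix Submodule

lemma star_mulVec_real {p q : ℕ} (M : Matrix (Fin p) (Fin q) ℝ) (x : Fin q → ℂ) :
    star ((M.map (Complex.ofReal)).mulVec x) = (M.map Complex.ofReal).mulVec (star x) := by
  funext k
  simp [Matrix.mulVec, dotProduct, Matrix.map_apply, Pi.star_apply, star_sum, star_mul',
    Complex.star_def, Complex.conj_ofReal, mul_comm]

lemma mem_pencilSub_iff {n m : ℕ} (A : Matrix (Fin n) (Fin n) ℂ)
    (B : Matrix (Fin n) (Fin m) ℂ) (lam : ℂ) (x : Fin n → ℂ) :
    x ∈ pencilSub A B lam ↔ ∃ u : Fin m → ℂ, A.mulVec x + B.mulVec u = lam • x := by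
  constructor
  · rintro ⟨⟨y, u⟩, hy, rfl⟩
    refine ⟨u, ?_⟩
    simp only [SetLike.mem_coe, LinearMap.mem_ker, LinearMap.coprod_apply, Matrix.mulVecLin_apply] at hy
    rw [Matrix.sub_mulVec, Matrix.smul_mulVec, Matrix.one_mulVec] at hy
    show A.mulVec y + B.mulVec u = lam • y
    linear_combination (norm := module) hy
  · rintro ⟨u, hu⟩
    refine ⟨(x, u), ?_, rfl⟩
    rw [SetLike.mem_coe, LinearMap.mem_ker, LinearMap.coprod_apply]
    simp only [Matrix.mulVecLin_apply]
    rw [Matrix.sub_mulVec, Matrix.smul_mulVec, Matrix.one_mulVec]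
    linear_combination (norm := module) hu

/-- Moore's theorem. -/
theorem moore_theorem (n m : ℕ) (hn : 0 < n) (hm : 0 < m)
    (A : Matrix (Fin n) (Fin n) ℝ) (B : Matrix (Fin n) (Fin m) ℝ)
    (lam : Fin n → ℂ) (hdist : Function.Injective lam)
    (hsc : ∀ i, ∃ j, lam j = (starRingEnd ℂ) (lam i))
    (v : Fin n → (Fin n → ℂ)) (hli : LinearIndependent ℂ v)
    (hconj : ∀ i j, lam i = (starRingEnd ℂ) (lam j) →
      v i = fun k => (starRingEnd ℂ) (v j k)) :
    (∃ F : Matrix (Fin m) (Fin n) ℝ,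
      ∀ i, (A.map Complex.ofReal + B.map Complex.ofReal * F.map Complex.ofReal).mulVecLin
          (v i) = lam i • v i)
    ↔ ∀ i, v i ∈ pencilSub (A.map Complex.ofReal) (B.map Complex.ofReal) (lam i) := by
  set Ac := A.map Complex.ofReal with hAc
  set Bc := B.map Complex.ofReal with hBc
  constructor
  · rintro ⟨F, hF⟩ i
    rw [mem_pencilSub_iff]
    refine ⟨(F.map Complex.ofReal).mulVec (v i), ?_⟩
    have := hF i
    rw [Matrix.mulVecLin_apply, Matrix.add_mulVec, ← Matrix.mulVec_mulVec] at this
    exact this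
  · intro hmem
    -- the conjugation involution σ
    set σ : Fin n → Fin n := fun i => (hsc i).choose with hσdef
    have hσ : ∀ i, lam (σ i) = (starRingEnd ℂ) (lam i) := fun i => (hsc i).choose_spec
    have hσ' : ∀ i, lam i = (starRingEnd ℂ) (lam (σ i)) := by
      intro i; rw [hσ i]; simp
    have hσσ : ∀ i, σ (σ i) = i := by
      intro i
      apply hdist
      rw [hσ (σ i), hσ i]; simp
    have hvσ : ∀ i, v i = star (v (σ i)) := by
      intro i
      have := hconj i (σ i) (hσ' i)
      funext k; rw [this]; rfl
    -- choose raw witnesses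
    have hch : ∀ i, ∃ u : Fin m → ℂ, Ac.mulVec (v i) + Bc.mulVec u = lam i • v i := by
      intro i; exact (mem_pencilSub_iff _ _ _ _).mp (hmem i)
    choose u0 hu0 using hch
    -- symmetrized witnesses
    set u : Fin n → (Fin m → ℂ) := fun i => (1/2 : ℂ) • (u0 i + star (u0 (σ i))) with hudef
    have hustar : ∀ i, star (u (σ i)) = u i := by
      intro i
      simp only [hudef, hσσ i]
      rw [star_smul, star_add, star_star]
      have h12 : star ((1:ℂ)/2) = (1:ℂ)/2 := by
        rw [Complex.star_def, map_div₀, _root_.map_one, Complex.conj_ofNat]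
      rw [h12, add_comm]
    have key : ∀ i, Ac.mulVec (v i) + Bc.mulVec (u i) = lam i • v i := by
      intro i
      have h1 := hu0 i
      have h2 := congrArg star (hu0 (σ i))
      rw [star_add, hAc, hBc, star_mulVec_real, star_mulVec_real, ← hAc, ← hBc,
        ← hvσ i, star_smul] at h2
      have h3 : (starRingEnd ℂ) (lam (σ i)) = lam i := (hσ' i).symm
      simp only [Complex.star_def] at h2
      rw [h3, ← hvσ i] at h2
      have : Ac.mulVec (v i) + Bc.mulVec ((1/2 : ℂ) • (u0 i + star (u0 (σ i))))
          = lam i • v i := by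
        rw [Matrix.mulVec_smul, Matrix.mulVec_add]
        linear_combination (norm := module) ((1:ℂ)/2) • h1 + ((1:ℂ)/2) • h2
      exact this
    -- basis
    have hcard : Fintype.card (Fin n) = Module.finrank ℂ (Fin n → ℂ) := by
      simp [Module.finrank_fin_fun]
    have : Nonempty (Fin n) := ⟨⟨0, hn⟩⟩
    let b : Module.Basis (Fin n) ℂ (Fin n → ℂ) := basisOfLinearIndependentOfCardEqFinrank hli hcard
    have hb : ∀ i, b i = v i := by
      intro i
      rw [show (b : Fin n → Fin n → ℂ) i = v i from
        congrFun (coe_basisOfLinearIndependentOfCardEqFinrank hli hcard) i]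
    let G : (Fin n → ℂ) →ₗ[ℂ] (Fin m → ℂ) := b.constr ℂ u
    have hG : ∀ i, G (v i) = u i := by
      intro i; rw [← hb i]; exact b.constr_basis ℂ u i
    -- realness of G
    let H : (Fin n → ℂ) →ₗ[ℂ] (Fin m → ℂ) :=
      { toFun := fun x => star (G (star x))
        map_add' := by
          intro x y
          show star (G (star (x + y))) = star (G (star x)) + star (G (star y))
          rw [star_add, G.map_add, star_add]
        map_smul' := by
          intro c x
          show star (G (star (c • x))) = c • star (G (star x))
          rw [star_smul, G.map_smul, star_smul, star_star] }
    have hHG : H = G := by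
      apply b.ext
      intro i
      show star (G (star (b i))) = G (b i)
      rw [hb i]
      have hsv : star (v i) = v (σ i) := by rw [hvσ i, star_star]
      rw [hsv, hG, hG, hustar]
    have hreal : ∀ x : Fin n → ℂ, star (G (star x)) = G x := fun x =>
      DFunLike.congr_fun hHG x
    -- define the real matrix F
    let Fc : Matrix (Fin m) (Fin n) ℂ := LinearMap.toMatrix' G
    have hFcmul : ∀ x, Fc.mulVec x = G x := by
      intro x
      have : Matrix.toLin' (LinearMap.toMatrix' G) = G := Matrix.toLin'_toMatrix' G
      rw [show Fc.mulVec x = Matrix.toLin' Fc x from rfl, this]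
    have hFcreal : ∀ k l, star (Fc k l) = Fc k l := by
      intro k l
      have hsingle : star (fun j' => if j' = l then (1:ℂ) else 0) =
          (fun j' => if j' = l then (1:ℂ) else 0) := by
        funext j'; by_cases h : j' = l <;> simp [h]
      show star (LinearMap.toMatrix' G k l) = LinearMap.toMatrix' G k l
      rw [LinearMap.toMatrix'_apply]
      rw [show (Pi.single l (1:ℂ) : Fin n → ℂ) = fun j' => if j' = l then (1:ℂ) else 0 from by
        funext j'; simp [Pi.single_apply]]
      calc star (G (fun j' => if j' = l then (1:ℂ) else 0) k)
          = star (G (star (fun j' => if j' = l then (1:ℂ) else 0))) k := by rw [hsingle]; rfl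
        _ = G (fun j' => if j' = l then (1:ℂ) else 0) k := by rw [hreal]
    set Fr : Matrix (Fin m) (Fin n) ℝ := fun k l => (Fc k l).re with hFrdef
    refine ⟨Fr, ?_⟩
    have hmap : Fr.map Complex.ofReal = Fc := by
      funext k l
      simp only [hFrdef, Matrix.map_apply]
      exact Complex.conj_eq_iff_re.mp (hFcreal k l)
    intro i
    rw [hmap, Matrix.mulVecLin_apply, Matrix.add_mulVec, ← Matrix.mulVec_mulVec, hFcmul,
      hG, key i]
end

section
/- Let h ≥ 1 and let μ_1, …, μ_h ∈ ℂ. Define the h×h complex matrix R̄ whose (i,k) entry (for 1 ≤ i,k ≤ h) is e_{h−i}(μ_1, …, μ_{k−1}, μ_{k+1}, …, μ_h), the elementary symmetric polynomial of degree h−i evaluated at the h−1 values {μ_ℓ : ℓ ≠ k} (so the last row, i = h, consists entirely of ones). Then det R̄ = ∏_{1 ≤ i < j ≤ h} (μ_j − μ_i). -/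
open Matrix Finset

lemma multiset_esymm_cons {R : Type*} [CommSemiring R] (a : R) (t : Multiset R) (m : ℕ) :
    (a ::ₘ t).esymm (m + 1) = t.esymm (m + 1) + a * t.esymm m := by
  simp only [Multiset.esymm, Multiset.powersetCard_cons, Multiset.map_add, Multiset.sum_add,
    Multiset.map_map, Function.comp, Multiset.prod_cons]
  rw [← Multiset.sum_map_mul_left]

lemma revPerm_eq_decompose (n : ℕ) :
    (Fin.revPerm : Equiv.Perm (Fin (n + 1))) =
      Equiv.Perm.decomposeFin.symm (0, Fin.revPerm) * finRotate (n + 1) := by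
  ext i
  induction i using Fin.lastCases with
  | last =>
    simp [Equiv.Perm.mul_apply, finRotate_last, Fin.rev_last]
  | cast j =>
    simp [Equiv.Perm.mul_apply, Fin.rev_castSucc, Fin.coeSucc_eq_succ]

lemma sign_revPerm (n : ℕ) :
    Equiv.Perm.sign (Fin.revPerm : Equiv.Perm (Fin n)) = (-1) ^ (∑ i ∈ Finset.range n, i) := by
  induction n with
  | zero =>
    have : (Fin.revPerm : Equiv.Perm (Fin 0)) = 1 := Equiv.ext fun i => i.elim0
    simp [this]
  | succ m ih =>
    rw [revPerm_eq_decompose, _root_.map_mul, Equiv.Perm.decomposeFin.symm_sign, if_pos rfl, one_mul,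
      ih, Finset.sum_range_succ, pow_add]
    cases m with
    | zero => simp
    | succ m' => rw [sign_finRotate, Nat.add_sub_cancel]

lemma esymm_erase_eq_sum (h : ℕ) (μ : Fin h → ℂ) (k : Fin h) (m : ℕ) :
    (((Finset.univ.erase k).val.map μ).esymm m) =
      ∑ j ∈ Finset.range (m + 1),
        (-1) ^ j * μ k ^ j * ((Finset.univ.val.map μ).esymm (m - j)) := by
  have hst : (Finset.univ.val.map μ) = μ k ::ₘ ((Finset.univ.erase k).val.map μ) := by
    have hc : (k ::ₘ (Finset.univ : Finset (Fin h)).val.erase k) = Finset.univ.val :=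
      Multiset.cons_erase (by simp)
    rw [← hc, Multiset.map_cons, Finset.erase_val]
  induction m with
  | zero => simp [Multiset.esymm]
  | succ m ih =>
    rw [Finset.sum_range_succ']
    simp only [Nat.succ_sub_succ, pow_succ, pow_zero, one_mul, Nat.sub_zero]
    have hrw : ∑ j ∈ Finset.range (m + 1),
        (-1 : ℂ) ^ j * -1 * (μ k ^ j * μ k) * ((Finset.univ.val.map μ).esymm (m - j))
        = -μ k * (((Finset.univ.erase k).val.map μ).esymm m) := by
      rw [ih, Finset.mul_sum]
      exact Finset.sum_congr rfl fun j _ => by ring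
    rw [hrw]
    have hcons := multiset_esymm_cons (μ k) ((Finset.univ.erase k).val.map μ) m
    rw [← hst] at hcons
    linear_combination -hcons

theorem det_esymm_matrix (h : ℕ) (hh : 1 ≤ h) (μ : Fin h → ℂ) :
    Matrix.det (Matrix.of fun i k : Fin h =>
        (((Finset.univ.erase k).val.map μ).esymm (h - 1 - (i : ℕ)))) =
      ∏ i : Fin h, ∏ j ∈ Finset.Ioi i, (μ j - μ i) := by
  set E : ℕ → ℂ := fun d => ((Finset.univ.val.map μ).esymm d) with hE
  set B : Matrix (Fin h) (Fin h) ℂ := Matrix.of fun i j : Fin h =>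
    if (j : ℕ) ≤ h - 1 - (i : ℕ) then (-1 : ℂ) ^ (j : ℕ) * E (h - 1 - (i : ℕ) - (j : ℕ)) else 0
    with hB
  have hM : (Matrix.of fun i k : Fin h =>
        (((Finset.univ.erase k).val.map μ).esymm (h - 1 - (i : ℕ))))
      = B * (Matrix.vandermonde μ)ᵀ := by
    ext i k
    rw [Matrix.mul_apply, Matrix.of_apply, esymm_erase_eq_sum h μ k (h - 1 - (i : ℕ))]
    simp only [hB, Matrix.of_apply, Matrix.transpose_apply, Matrix.vandermonde_apply]
    rw [Fin.sum_univ_eq_sum_range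
      (fun j => (if j ≤ h - 1 - (i : ℕ) then (-1 : ℂ) ^ j * E (h - 1 - (i : ℕ) - j) else 0)
        * μ k ^ j) h]
    have hsub : Finset.range (h - 1 - (i : ℕ) + 1) ⊆ Finset.range h :=
      Finset.range_subset_range.mpr (by omega)
    rw [← Finset.sum_subset hsub (fun x _ hnx => by
      rw [if_neg (by simpa using hnx), zero_mul])]
    refine Finset.sum_congr rfl fun j hj => ?_
    rw [if_pos (Nat.lt_succ_iff.mp (Finset.mem_range.mp hj))]
    ring
  have hUtri : (B.submatrix id Fin.revPerm).BlockTriangular id := by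
    intro i j hij
    have h2 : (j : ℕ) < (i : ℕ) := hij
    have h3 : (i : ℕ) < h := i.isLt
    have hr : (Fin.rev j : ℕ) = h - ((j : ℕ) + 1) := Fin.val_rev j
    simp only [Matrix.submatrix_apply, id_eq, hB, Matrix.of_apply, Fin.revPerm_apply]
    rw [if_neg (by omega)]
  have hdetU : (B.submatrix id Fin.revPerm).det = (-1 : ℂ) ^ (∑ i ∈ Finset.range h, i) := by
    rw [Matrix.det_of_upperTriangular hUtri]
    have : ∀ i : Fin h, (B.submatrix id Fin.revPerm) i i = (-1 : ℂ) ^ ((Fin.rev i : ℕ)) := by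
      intro i
      have h3 : (i : ℕ) < h := i.isLt
      have hr : (Fin.rev i : ℕ) = h - ((i : ℕ) + 1) := Fin.val_rev i
      simp only [Matrix.submatrix_apply, id_eq, hB, Matrix.of_apply, Fin.revPerm_apply]
      rw [if_pos (by omega), show h - 1 - (i : ℕ) - ((Fin.rev i : ℕ)) = 0 by omega]
      have hE0 : E 0 = 1 := by simp [hE, Multiset.esymm]
      rw [hE0, mul_one]
    rw [Finset.prod_congr rfl fun i _ => this i]
    rw [show (∏ i : Fin h, (-1 : ℂ) ^ ((Fin.rev i : ℕ))) = ∏ i : Fin h, (-1 : ℂ) ^ ((i : ℕ)) from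
      Equiv.prod_comp Fin.revPerm (fun i : Fin h => (-1 : ℂ) ^ ((i : ℕ)))]
    rw [Finset.prod_pow_eq_pow_sum, Fin.sum_univ_eq_sum_range (fun i => i) h]
  have hdetB : B.det = 1 := by
    have hp := Matrix.det_permute' Fin.revPerm B
    rw [hdetU, sign_revPerm] at hp
    have hcast : (((((-1 : ℤˣ) ^ (∑ i ∈ Finset.range h, i)) : ℤˣ) : ℤ) : ℂ)
        = (-1 : ℂ) ^ (∑ i ∈ Finset.range h, i) := by push_cast; ring
    rw [hcast] at hp
    have hX : ((-1 : ℂ) ^ (∑ i ∈ Finset.range h, i)) * ((-1 : ℂ) ^ (∑ i ∈ Finset.range h, i))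
        = 1 := by
      rw [← pow_add, ← two_mul, pow_mul]; norm_num
    calc B.det = ((-1 : ℂ) ^ (∑ i ∈ Finset.range h, i) * (-1 : ℂ) ^ (∑ i ∈ Finset.range h, i))
          * B.det := by rw [hX, one_mul]
      _ = (-1 : ℂ) ^ (∑ i ∈ Finset.range h, i) *
          ((-1 : ℂ) ^ (∑ i ∈ Finset.range h, i) * B.det) := by ring
      _ = (-1 : ℂ) ^ (∑ i ∈ Finset.range h, i) * (-1 : ℂ) ^ (∑ i ∈ Finset.range h, i) := by
          rw [← hp]
      _ = 1 := hX
  rw [hM, Matrix.det_mul, hdetB, one_mul, Matrix.det_transpose, Matrix.det_vandermonde]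
end
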